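/- arXiv:2404.13444 — 6 statements merged into one kernel-verified Lean document; each statement's English description precedes it below -/
import Mathlib

section
/- Let (c_{j,n})_{0 ≤ j ≤ n} be real numbers such that lim_{n→∞} max_{0 ≤ j ≤ n} |c_{j,n}| = 0, lim_{n→∞} ∑_{j=0}^{n} c_{j,n} = λ for some real λ, and sup_{n} ∑_{j=0}^{n} |c_{j,n}| < ∞. Then lim_{n→∞} ∏_{j=0}^{n} (1 + c_{j,n}) = e^{λ}. -/
open Filter

lemma log_one_add_est {x : ℝ} (hx : |x| ≤ 1/2) : |Real.log (1 + x) - x| ≤ 2 * x ^ 2 := by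
  have h1 : |(-x)| < 1 := by rw [abs_neg]; linarith
  have := Real.abs_log_sub_add_sum_range_le h1 1
  simp only [Finset.sum_range_one, pow_one, sub_neg_eq_add] at this
  have h2 : (1 : ℝ) - |(-x)| ≥ 1/2 := by rw [abs_neg]; linarith
  have h3 : |(-x)| ^ 2 / (1 - |(-x)|) ≤ 2 * x ^ 2 := by
    rw [abs_neg, sq_abs]
    rw [div_le_iff₀ (by linarith [abs_nonneg x])]
    nlinarith [sq_nonneg x, abs_nonneg x]
  have heq : -x / (0 + 1) + Real.log (1 - -x) = Real.log (1 + x) - x := by ring_nf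
  calc |Real.log (1 + x) - x| = |(-x) ^ (0+1) / (0 + 1) + Real.log (1 - -x)| := by
        rw [heq.symm]; ring_nf
    _ ≤ |(-x)| ^ (1+1) / (1 - |(-x)|) := by simpa using this
    _ ≤ 2 * x ^ 2 := h3

/-- Durrett, Exercise 3.1.1: if a triangular array `c_{j,n}` (`0 ≤ j ≤ n`) satisfies
`max_{0 ≤ j ≤ n} |c_{j,n}| → 0`, `∑_{j=0}^n c_{j,n} → λ`, and
`sup_n ∑_{j=0}^n |c_{j,n}| < ∞`, then `∏_{j=0}^n (1 + c_{j,n}) → e^λ`. -/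
theorem triangular_array_product_tendsto_exp
    (c : ℕ → ℕ → ℝ) (lam : ℝ)
    (hmax : Tendsto
      (fun n => (Finset.range (n + 1)).sup' Finset.nonempty_range_add_one (fun j => |c n j|))
      atTop (nhds 0))
    (hsum : Tendsto (fun n => ∑ j ∈ Finset.range (n + 1), c n j) atTop (nhds lam))
    (hbdd : ∃ M : ℝ, ∀ n, ∑ j ∈ Finset.range (n + 1), |c n j| ≤ M) :
    Tendsto (fun n => ∏ j ∈ Finset.range (n + 1), (1 + c n j)) atTop
      (nhds (Real.exp lam)) := by
  obtain ⟨M, hM⟩ := hbdd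
  set m : ℕ → ℝ := fun n => (Finset.range (n + 1)).sup' Finset.nonempty_range_add_one
      (fun j => |c n j|) with hm
  -- eventually max ≤ 1/2
  have hev : ∀ᶠ n in atTop, m n ≤ 1/2 := by
    have := hmax.eventually (eventually_le_nhds (by norm_num : (0:ℝ) < 1/2))
    exact this
  -- error term bound
  have herr : Tendsto (fun n => ∑ j ∈ Finset.range (n + 1),
      (Real.log (1 + c n j) - c n j)) atTop (nhds 0) := by
    have hb : ∀ᶠ n in atTop, |∑ j ∈ Finset.range (n + 1),
        (Real.log (1 + c n j) - c n j)| ≤ 2 * m n * (M ⊔ 0) := by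
      filter_upwards [hev] with n hn
      have hjle : ∀ j ∈ Finset.range (n + 1), |c n j| ≤ m n := fun j hj =>
        Finset.le_sup' (fun j => |c n j|) hj
      calc |∑ j ∈ Finset.range (n + 1), (Real.log (1 + c n j) - c n j)|
          ≤ ∑ j ∈ Finset.range (n + 1), |Real.log (1 + c n j) - c n j| :=
            Finset.abs_sum_le_sum_abs _ _
        _ ≤ ∑ j ∈ Finset.range (n + 1), 2 * m n * |c n j| := by
            apply Finset.sum_le_sum
            intro j hj
            have h1 : |c n j| ≤ 1/2 := le_trans (hjle j hj) hn
            calc |Real.log (1 + c n j) - c n j| ≤ 2 * (c n j) ^ 2 := log_one_add_est h1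
              _ = 2 * |c n j| * |c n j| := by rw [← sq_abs]; ring
              _ ≤ 2 * m n * |c n j| := by
                  have := hjle j hj
                  nlinarith [abs_nonneg (c n j)]
        _ = 2 * m n * ∑ j ∈ Finset.range (n + 1), |c n j| := by
            rw [Finset.mul_sum]
        _ ≤ 2 * m n * (M ⊔ 0) := by
            have hmn : 0 ≤ m n := le_trans (abs_nonneg _) (hjle 0 (by simp))
            have : ∑ j ∈ Finset.range (n + 1), |c n j| ≤ M ⊔ 0 :=
              le_trans (hM n) le_sup_left
            nlinarith
    have hlim : Tendsto (fun n => 2 * m n * (M ⊔ 0)) atTop (nhds 0) := by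
      have := (hmax.const_mul 2).mul_const (M ⊔ 0)
      simpa using this
    have habs : Tendsto (fun n => |∑ j ∈ Finset.range (n + 1),
        (Real.log (1 + c n j) - c n j)|) atTop (nhds 0) := by
      apply squeeze_zero' (Eventually.of_forall fun n => abs_nonneg _) hb hlim
    rw [tendsto_zero_iff_abs_tendsto_zero]
    exact habs
  -- sum of logs tends to lam
  have hlog : Tendsto (fun n => ∑ j ∈ Finset.range (n + 1), Real.log (1 + c n j))
      atTop (nhds lam) := by
    have := herr.add hsum
    simp only [zero_add] at this
    convert this using 2 with n
    rw [← Finset.sum_add_distrib]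
    congr 1 with j
    ring
  have hexp := (Real.continuous_exp.tendsto lam).comp hlog
  apply hexp.congr'
  filter_upwards [hev] with n hn
  have hpos : ∀ j ∈ Finset.range (n + 1), 0 < 1 + c n j := by
    intro j hj
    have h1 : |c n j| ≤ 1/2 := le_trans (Finset.le_sup' (fun j => |c n j|) hj) hn
    have := abs_le.mp h1
    linarith [this.1]
  simp only [Function.comp_apply]
  rw [Real.exp_sum]
  exact Finset.prod_congr rfl fun j hj => Real.exp_log (hpos j hj)
end

section
/- For every real number a there exists a constant D > 0 such that for all integers N ≥ 1 and all integers k with |k| ≤ N^{5/6} and |k + ⌊a√N⌋| ≤ N^{5/6}, one has exp(−2ak/√N) · C(2N, N+k) ≤ D · C(2N, N+k+⌊a√N⌋). -/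
open Real

private lemma log_one_add_le' {u : ℝ} (hu : |u| ≤ 1/2) : Real.log (1+u) ≤ u - u^2/2 + 2*|u|^3 := by
  have h : |(-u)| < 1 := by rw [abs_neg]; linarith [abs_nonneg u]
  have := Real.abs_log_sub_add_sum_range_le h 2
  simp [Finset.sum_range_succ] at this
  have h2 : |u| ^ 3 / (1 - |u|) ≤ 2*|u|^3 := by
    rw [div_le_iff₀ (by linarith [abs_nonneg u])]
    nlinarith [abs_nonneg u, pow_nonneg (abs_nonneg u) 3]
  have h3 := (abs_le.1 this).2
  nlinarith [h2, h3]

private lemma log_one_sub_ge' {v : ℝ} (hv : |v| ≤ 1/2) : -v - v^2/2 - 2*|v|^3 ≤ Real.log (1-v) := by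
  have h : |v| < 1 := by linarith [abs_nonneg v]
  have := Real.abs_log_sub_add_sum_range_le h 2
  simp [Finset.sum_range_succ] at this
  have h2 : |v| ^ 3 / (1 - |v|) ≤ 2*|v|^3 := by
    rw [div_le_iff₀ (by linarith [abs_nonneg v])]
    nlinarith [abs_nonneg v, pow_nonneg (abs_nonneg v) 3]
  have h4 := (abs_le.1 this).1
  nlinarith [h2, h4]

private lemma factor_le' {N : ℝ} (hN : 1 ≤ N) {m : ℝ} (hm : |m| ≤ N/2) (hm1 : |m+1| ≤ N/2) :
    (N+m+1)/(N-m) ≤ Real.exp ((2*m+1)/N + 1/N + 2*(|m|^3+|m+1|^3)/N^3) := by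
  have hN0 : (0:ℝ) < N := by linarith
  set u : ℝ := (m+1)/N with hu
  set v : ℝ := m/N with hv
  have habsu : |u| ≤ 1/2 := by
    rw [hu, abs_div, abs_of_pos hN0, div_le_iff₀ hN0]; linarith
  have habsv : |v| ≤ 1/2 := by
    rw [hv, abs_div, abs_of_pos hN0, div_le_iff₀ hN0]; linarith
  have hmle := (abs_le.1 hm)
  have hm1le := (abs_le.1 hm1)
  have hNm : 0 < N - m := by linarith
  have h1u : 0 < 1 + u := by
    have := (abs_le.1 habsu).1; linarith
  have h1v : 0 < 1 - v := by
    have := (abs_le.1 habsv).2; linarith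
  have hup : 1 + u ≤ Real.exp (u - u^2/2 + 2*|u|^3) := by
    calc 1 + u = Real.exp (Real.log (1+u)) := (Real.exp_log h1u).symm
    _ ≤ _ := Real.exp_le_exp.2 (log_one_add_le' habsu)
  have hdn : Real.exp (-v - v^2/2 - 2*|v|^3) ≤ 1 - v := by
    calc Real.exp (-v - v^2/2 - 2*|v|^3) ≤ Real.exp (Real.log (1-v)) :=
      Real.exp_le_exp.2 (log_one_sub_ge' habsv)
    _ = 1 - v := Real.exp_log h1v
  have key : (1+u)/(1-v) ≤ Real.exp ((u - u^2/2 + 2*|u|^3) - (-v - v^2/2 - 2*|v|^3)) := by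
    rw [div_le_iff₀ h1v, Real.exp_sub, div_mul_eq_mul_div, le_div_iff₀ (Real.exp_pos _)]
    exact mul_le_mul hup hdn (Real.exp_nonneg _) (Real.exp_nonneg _)
  have heq : (N+m+1)/(N-m) = (1+u)/(1-v) := by
    rw [hu, hv]; field_simp; ring
  rw [heq]
  refine key.trans (Real.exp_le_exp.2 ?_)
  have h3u : |u|^3 = |m+1|^3/N^3 := by
    rw [hu, abs_div, abs_of_pos hN0, div_pow]
  have h3v : |v|^3 = |m|^3/N^3 := by
    rw [hv, abs_div, abs_of_pos hN0, div_pow]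
  rw [h3u, h3v, hu, hv]
  have hquad : ((m/N)^2/2 - ((m+1)/N)^2/2) ≤ 1/N := by
    have e : (m/N)^2/2 - ((m+1)/N)^2/2 = (m^2 - (m+1)^2)/(2*N^2) := by
      ring
    rw [e, div_le_div_iff₀ (by positivity) hN0]
    nlinarith
  have hlin : (m+1)/N + m/N = (2*m+1)/N := by ring
  have h3 : 2*(|m|^3+|m+1|^3)/N^3 = 2*(|m|^3/N^3) + 2*(|m+1|^3/N^3) := by ring
  linarith [hquad, hlin, h3]

private lemma step_le' {N : ℕ} (hN : 1 ≤ N) {m : ℤ} (hm : |(m:ℝ)| ≤ N/2) (hm1 : |(m:ℝ)+1| ≤ N/2) :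
    ((2*N).choose ((N:ℤ)+m).toNat : ℝ) ≤
      Real.exp ((2*m+1)/N + 1/N + 2*(|(m:ℝ)|^3+|(m:ℝ)+1|^3)/N^3)
        * ((2*N).choose ((N:ℤ)+m+1).toNat : ℝ) := by
  have hN0 : (0:ℝ) < N := by exact_mod_cast hN
  have hmle := abs_le.1 hm
  have hm0 : 0 ≤ (N:ℤ) + m := by
    have h1 : -(N:ℝ) ≤ m := by linarith
    have : (0:ℝ) ≤ (N:ℝ) + (m:ℝ) := by linarith
    exact_mod_cast this
  set p : ℕ := ((N:ℤ)+m).toNat with hp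
  have hpcast : (p:ℝ) = (N:ℝ) + m := by
    have := Int.toNat_of_nonneg hm0
    rw [hp]
    exact_mod_cast congrArg (Int.cast : ℤ → ℝ) this
  have hp1 : ((N:ℤ)+m+1).toNat = p + 1 := by
    omega
  have hplt : p + 1 ≤ 2*N := by
    have h1 : (m:ℝ)+1 ≤ N/2 := (abs_le.1 hm1).2
    have h2 : (p:ℝ) + 1 ≤ 2*N := by rw [hpcast]; linarith
    exact_mod_cast h2
  have hid := Nat.choose_succ_right_eq (2*N) p
  have hidR : ((2*N).choose (p+1) : ℝ) * (p+1) = ((2*N).choose p : ℝ) * ((2*N:ℕ) - p : ℕ) := by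
    exact_mod_cast congrArg (Nat.cast : ℕ → ℝ) hid
  have hsub : (((2*N:ℕ) - p : ℕ) : ℝ) = 2*(N:ℝ) - p := by
    have : p ≤ 2*N := by omega
    push_cast [Nat.cast_sub this]; ring
  rw [hsub] at hidR
  have hNm : 0 < 2*(N:ℝ) - p := by rw [hpcast]; linarith
  have hchoose : ((2*N).choose p : ℝ) = ((2*N).choose (p+1) : ℝ) * ((p:ℝ)+1) / (2*(N:ℝ) - p) := by
    field_simp
    linarith [hidR]
  rw [hp1, hchoose]
  have hratio : ((p:ℝ)+1) / (2*(N:ℝ) - p) ≤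
      Real.exp ((2*m+1)/N + 1/N + 2*(|(m:ℝ)|^3+|(m:ℝ)+1|^3)/N^3) := by
    have e1 : (p:ℝ) + 1 = (N:ℝ) + m + 1 := by rw [hpcast]
    have e2 : 2*(N:ℝ) - p = (N:ℝ) - m := by rw [hpcast]; ring
    rw [e1, e2]
    exact factor_le' (by exact_mod_cast hN) hm hm1
  calc ((2*N).choose (p+1) : ℝ) * ((p:ℝ)+1) / (2*(N:ℝ) - p)
      = (((p:ℝ)+1) / (2*(N:ℝ) - p)) * ((2*N).choose (p+1) : ℝ) := by ring
    _ ≤ Real.exp ((2*m+1)/N + 1/N + 2*(|(m:ℝ)|^3+|(m:ℝ)+1|^3)/N^3)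
        * ((2*N).choose (p+1) : ℝ) := by
        apply mul_le_mul_of_nonneg_right hratio (by positivity)

private lemma chain_le' (N : ℕ) (hN : 1 ≤ N) (B : ℝ) (hBN : 2*B ≤ N) :
    ∀ t : ℕ, ∀ k : ℤ, |(k:ℝ)| ≤ B → |(k:ℝ)+t| ≤ B →
    ((2*N).choose ((N:ℤ)+k).toNat : ℝ) ≤
      Real.exp ((2*(k:ℝ)*t + t^2 + t)/N + t*(4*B^3)/N^3)
        * ((2*N).choose ((N:ℤ)+k+t).toNat : ℝ) := by
  have hN0 : (0:ℝ) < N := by exact_mod_cast hN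
  intro t
  induction t with
  | zero =>
    intro k hk hkt
    simp
  | succ t ih =>
    intro k hk hkt
    have hB0 : 0 ≤ B := le_trans (abs_nonneg _) hk
    have hkle := abs_le.1 hk
    have hktle := abs_le.1 hkt
    push_cast at hktle
    have hmid : |(k:ℝ)+t| ≤ B := by
      rw [abs_le]; constructor <;> nlinarith
    have hIH := ih k hk hmid
    have hm : |((k+t : ℤ):ℝ)| ≤ (N:ℝ)/2 := by
      push_cast; exact le_trans hmid (by linarith)
    have hm1 : |((k+t : ℤ):ℝ)+1| ≤ (N:ℝ)/2 := by
      push_cast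
      have : |(k:ℝ)+t+1| ≤ B := by rw [abs_le]; constructor <;> linarith
      exact le_trans this (by linarith)
    have hstep := step_le' hN hm hm1
    have hidx1 : (N:ℤ) + (k+t) = (N:ℤ) + k + t := by ring
    have hidx2 : (N:ℤ) + k + t + 1 = (N:ℤ) + k + (t+1 : ℕ) := by push_cast; ring
    rw [hidx1, hidx2] at hstep
    calc ((2*N).choose ((N:ℤ)+k).toNat : ℝ)
        ≤ Real.exp ((2*(k:ℝ)*t + t^2 + t)/N + t*(4*B^3)/N^3)
          * ((2*N).choose ((N:ℤ)+k+t).toNat : ℝ) := hIH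
      _ ≤ Real.exp ((2*(k:ℝ)*t + t^2 + t)/N + t*(4*B^3)/N^3)
          * (Real.exp ((2*((k+t:ℤ):ℝ)+1)/N + 1/N + 2*(|((k+t:ℤ):ℝ)|^3+|((k+t:ℤ):ℝ)+1|^3)/N^3)
             * ((2*N).choose ((N:ℤ)+k+(t+1:ℕ)).toNat : ℝ)) := by
          exact mul_le_mul_of_nonneg_left hstep (Real.exp_nonneg _)
      _ ≤ Real.exp ((2*(k:ℝ)*(t+1:ℕ) + (t+1:ℕ)^2 + (t+1:ℕ))/N + (t+1:ℕ)*(4*B^3)/N^3)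
          * ((2*N).choose ((N:ℤ)+k+(t+1:ℕ)).toNat : ℝ) := by
          rw [← mul_assoc, ← Real.exp_add]
          apply mul_le_mul_of_nonneg_right _ (by positivity)
          apply Real.exp_le_exp.2
          push_cast
          have hcube1 : |(k:ℝ)+t|^3 ≤ B^3 := by
            apply pow_le_pow_left₀ (abs_nonneg _) hmid
          have hcube2 : |(k:ℝ)+t+1|^3 ≤ B^3 := by
            apply pow_le_pow_left₀ (abs_nonneg _)
            rw [abs_le]; constructor <;> linarith
          have e1 : (2*(k:ℝ)*t + t^2 + t)/N + ((2*((k:ℝ)+t)+1)/N + 1/N) =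
              (2*(k:ℝ)*(t+1) + (t+1)^2 + (t+1))/N := by ring
          have e2 : 2*(|(k:ℝ)+t|^3+|(k:ℝ)+t+1|^3)/N^3 ≤ 4*B^3/N^3 := by
            apply div_le_div_of_nonneg_right _ (by positivity)
            linarith
          have e3 : (t:ℝ)*(4*B^3)/N^3 + 4*B^3/N^3 = ((t:ℝ)+1)*(4*B^3)/N^3 := by ring
          linarith [e1, e2, e3]

private lemma choose_symm_int' (N : ℕ) {j : ℤ} (hj1 : -(N:ℤ) ≤ j) (hj2 : j ≤ N) :
    (2*N).choose ((N:ℤ)+j).toNat = (2*N).choose ((N:ℤ)-j).toNat := by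
  have hp : ((N:ℤ)+j).toNat ≤ 2*N := by omega
  have he : 2*N - ((N:ℤ)+j).toNat = ((N:ℤ)-j).toNat := by omega
  rw [← he, Nat.choose_symm hp]

private lemma chain_neg' (N : ℕ) (hN : 1 ≤ N) (B : ℝ) (hBN : 2*B ≤ N) (t : ℕ) (k : ℤ)
    (hk : |(k:ℝ)| ≤ B) (hkt : |(k:ℝ)-t| ≤ B) :
    ((2*N).choose ((N:ℤ)+k).toNat : ℝ) ≤
      Real.exp ((-2*(k:ℝ)*t + t^2 + t)/N + t*(4*B^3)/N^3)
        * ((2*N).choose ((N:ℤ)+k-t).toNat : ℝ) := by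
  have hN0 : (0:ℝ) < N := by exact_mod_cast hN
  have hkle := abs_le.1 hk
  have hktle := abs_le.1 hkt
  have hkN1 : -(N:ℤ) ≤ k := by
    have : -(N:ℝ) ≤ k := by linarith
    exact_mod_cast this
  have hkN2 : k ≤ (N:ℤ) := by
    have : (k:ℝ) ≤ N := by linarith
    exact_mod_cast this
  have hktN1 : -(N:ℤ) ≤ k - t := by
    have : -(N:ℝ) ≤ (k:ℝ) - t := by linarith
    exact_mod_cast this
  have hktN2 : k - (t:ℤ) ≤ N := by
    have : (k:ℝ) - t ≤ N := by linarith
    exact_mod_cast this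
  have h1 : (2*N).choose ((N:ℤ)+k).toNat = (2*N).choose ((N:ℤ)+(-k)).toNat := by
    have := choose_symm_int' N hkN1 hkN2
    rw [this, show (N:ℤ)-k = (N:ℤ)+(-k) by ring]
  have h2 : (2*N).choose ((N:ℤ)+(-k)+t).toNat = (2*N).choose ((N:ℤ)+k-t).toNat := by
    have := choose_symm_int' N hktN1 hktN2
    rw [show (N:ℤ)+(-k)+t = (N:ℤ)-(k-t) by ring, ← this,
      show (N:ℤ)+(k-t) = (N:ℤ)+k-t by ring]
  have hc := chain_le' N hN B hBN t (-k) (by push_cast; rwa [abs_neg]) (by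
    push_cast
    rw [show -(k:ℝ) + t = -((k:ℝ) - t) by ring, abs_neg]
    exact hkt)
  rw [h1, ← h2]
  convert hc using 3
  push_cast; ring

private lemma choose_le_two_pow' (n k : ℕ) : n.choose k ≤ 2^n := by
  rcases le_or_gt k n with h | h
  · calc n.choose k ≤ ∑ m ∈ Finset.range (n+1), n.choose m :=
      Finset.single_le_sum (fun i _ => Nat.zero_le _) (Finset.mem_range.2 (by omega))
    _ = 2^n := Nat.sum_range_choose n
  · rw [Nat.choose_eq_zero_of_lt h]; exact Nat.zero_le _

set_option maxHeartbeats 2000000 in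
/-- For every real `a` there is a constant `D > 0` such that for all integers `N ≥ 1` and all
integers `k` with `|k| ≤ N^{5/6}` and `|k + ⌊a√N⌋| ≤ N^{5/6}`,
`exp(−2ak/√N) · C(2N, N+k) ≤ D · C(2N, N+k+⌊a√N⌋)`. -/
theorem binomial_shift_bound (a : ℝ) :
    ∃ D : ℝ, 0 < D ∧ ∀ N : ℕ, 1 ≤ N → ∀ k : ℤ,
      |(k : ℝ)| ≤ (N : ℝ) ^ ((5 : ℝ) / 6) →
      |((k + ⌊a * Real.sqrt N⌋ : ℤ) : ℝ)| ≤ (N : ℝ) ^ ((5 : ℝ) / 6) →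
      Real.exp (-2 * a * k / Real.sqrt N) * ((2 * N).choose ((N : ℤ) + k).toNat : ℝ)
        ≤ D * ((2 * N).choose ((N : ℤ) + k + ⌊a * Real.sqrt N⌋).toNat : ℝ) := by
  refine ⟨Real.exp (a^2 + 20*|a| + 10) + Real.exp (20*|a|) * 4^1000, by positivity, ?_⟩
  intro N hN k hk hks
  have hN0 : (0:ℝ) < N := by exact_mod_cast hN
  set r : ℝ := Real.sqrt N with hrdef
  set B : ℝ := (N:ℝ)^((5:ℝ)/6) with hBdef
  set s : ℤ := ⌊a * r⌋ with hsdef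
  have hr : r = (N:ℝ)^((1:ℝ)/2) := Real.sqrt_eq_rpow N
  have hr0 : 0 < r := Real.sqrt_pos.2 hN0
  have hr1 : 1 ≤ r := by
    rw [hrdef, show (1:ℝ) = Real.sqrt 1 by simp]
    exact Real.sqrt_le_sqrt (by exact_mod_cast hN)
  have hrr : r * r = N := Real.mul_self_sqrt hN0.le
  have hrN : r ≤ N := by nlinarith
  have hB1 : 1 ≤ B := Real.one_le_rpow (by exact_mod_cast hN) (by norm_num)
  have hB0 : 0 < B := by linarith
  have hBN : B ≤ N := by
    calc B ≤ (N:ℝ)^((1:ℝ)) :=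
          Real.rpow_le_rpow_of_exponent_le (by exact_mod_cast hN) (by norm_num)
    _ = N := Real.rpow_one _
  have hB3 : B^3 = (N:ℝ)^((5:ℝ)/2) := by
    rw [hBdef, ← Real.rpow_natCast ((N:ℝ)^((5:ℝ)/6)) 3, ← Real.rpow_mul hN0.le]
    norm_num
  have hN3 : (N:ℝ)^(3:ℕ) = B^3 * r := by
    rw [hB3, hr, ← Real.rpow_add hN0, ← Real.rpow_natCast (N:ℝ) 3]
    norm_num
  -- floor bounds
  have hfl1 : (s:ℝ) ≤ a * r := Int.floor_le _
  have hfl2 : a * r - 1 < s := Int.sub_one_lt_floor (a*r)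
  have hkB : |(k:ℝ)| ≤ B := hk
  have hksB : |(k:ℝ) + s| ≤ B := by
    have := hks
    push_cast at this
    exact this
  have hksle := abs_le.1 hksB
  have hkle := abs_le.1 hkB
  -- RHS choose index valid
  have hRidx : ((N:ℤ) + k + s).toNat ≤ 2*N := by
    have h1 : (k:ℝ) + s ≤ N := le_trans hksle.2 hBN
    have h2 : k + s ≤ (N:ℤ) := by exact_mod_cast h1
    omega
  have hR1 : (1:ℝ) ≤ ((2*N).choose ((N:ℤ)+k+s).toNat : ℝ) := by
    have := Nat.choose_pos hRidx
    exact_mod_cast this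
  have hR0 : (0:ℝ) ≤ ((2*N).choose ((N:ℤ)+k+s).toNat : ℝ) := by linarith
  rcases le_or_gt 1000 N with hbig | hsmall
  · -- large N
    have h3B : 3 * B ≤ N := by
      have h6 : (3:ℝ) ≤ (N:ℝ)^((1:ℝ)/6) := by
        have h729 : (729:ℝ) ≤ N := by
          have : (729:ℕ) ≤ N := by omega
          exact_mod_cast this
        calc (3:ℝ) = ((729:ℝ))^((1:ℝ)/6) := by
              rw [show (729:ℝ) = (3:ℝ)^(6:ℕ) by norm_num, ← Real.rpow_natCast (3:ℝ) 6,
                ← Real.rpow_mul (by norm_num)]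
              norm_num
          _ ≤ (N:ℝ)^((1:ℝ)/6) := Real.rpow_le_rpow (by norm_num) h729 (by norm_num)
      have hsplit : B * (N:ℝ)^((1:ℝ)/6) = N := by
        rw [hBdef, ← Real.rpow_add hN0]
        norm_num
      nlinarith
    have h2B : 2*B ≤ N := by linarith
    have hExpBound : ∀ E : ℝ, -2*a*k/r + E ≤ a^2 + 20*|a| + 10 →
        Real.exp (-2*a*(k:ℝ)/r) * Real.exp E ≤
          Real.exp (a^2 + 20*|a| + 10) + Real.exp (20*|a|) * 4^1000 := by
      intro E hE
      rw [← Real.exp_add]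
      have h1 : Real.exp (-2*a*(k:ℝ)/r + E) ≤ Real.exp (a^2 + 20*|a| + 10) :=
        Real.exp_le_exp.2 hE
      have h2 : (0:ℝ) < Real.exp (20*|a|) * 4^1000 := by positivity
      linarith
    rcases le_or_gt 0 s with hs | hs
    · -- s ≥ 0
      set t : ℕ := s.toNat with htdef
      have htz : (t:ℤ) = s := Int.toNat_of_nonneg hs
      have ht : (t:ℝ) = (s:ℝ) := by exact_mod_cast htz
      have ht0 : (0:ℝ) ≤ t := by positivity
      have hchain := chain_le' N hN B h2B t k hkB (by rw [ht]; exact hksB)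
      rw [htz] at hchain
      set E : ℝ := (2*(k:ℝ)*t + t^2 + t)/N + t*(4*B^3)/N^3 with hEdef
      -- exponent estimate
      have htar : (t:ℝ) ≤ a*r := by rw [ht]; exact hfl1
      have htar2 : a*r - 1 < (t:ℝ) := by rw [ht]; exact hfl2
      have ha0 : 0 ≤ a := by nlinarith
      have hA : -2*a*(k:ℝ)/r + 2*(k:ℝ)*t/N ≤ 1 := by
        have e : -2*a*(k:ℝ)/r + 2*(k:ℝ)*t/N = 2*(k:ℝ)*((t:ℝ) - a*r)/N := by
          rw [show (N:ℝ) = r*r from hrr.symm]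
          field_simp
          ring
        rw [e, div_le_one hN0]
        have p1 : 0 ≤ (B - (k:ℝ)) * (((t:ℝ) - a*r) + 1) :=
          mul_nonneg (by linarith) (by linarith)
        have p2 : 0 ≤ (B + (k:ℝ)) * (-((t:ℝ) - a*r)) :=
          mul_nonneg (by linarith) (by linarith)
        nlinarith [p1, p2]
      have hBclaim : ((t:ℝ)^2 + t)/N ≤ a^2 + |a| := by
        rw [div_le_iff₀ hN0]
        have h1 : (t:ℝ)^2 ≤ a^2 * N := by nlinarith
        have h2 : (t:ℝ) ≤ a * N := by nlinarith
        nlinarith [le_abs_self a, hN0]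
      have hCclaim : (t:ℝ)*(4*B^3)/N^3 ≤ 4*|a| := by
        have e : (t:ℝ)*(4*B^3)/(N:ℝ)^3 = 4*(t:ℝ)/r := by
          rw [hN3]; field_simp
        rw [e, div_le_iff₀ hr0]
        nlinarith [le_abs_self a]
      have hEtot : -2*a*(k:ℝ)/r + E ≤ a^2 + 20*|a| + 10 := by
        have esplit : E = 2*(k:ℝ)*t/N + ((t:ℝ)^2 + t)/N + (t:ℝ)*(4*B^3)/N^3 := by
          rw [hEdef]; ring
        rw [esplit]
        have := abs_nonneg a
        linarith
      calc Real.exp (-2*a*(k:ℝ)/r) * ((2*N).choose ((N:ℤ)+k).toNat : ℝ)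
          ≤ Real.exp (-2*a*(k:ℝ)/r) * (Real.exp E * ((2*N).choose ((N:ℤ)+k+s).toNat : ℝ)) :=
            mul_le_mul_of_nonneg_left hchain (Real.exp_nonneg _)
        _ = (Real.exp (-2*a*(k:ℝ)/r) * Real.exp E) * ((2*N).choose ((N:ℤ)+k+s).toNat : ℝ) := by
            ring
        _ ≤ (Real.exp (a^2 + 20*|a| + 10) + Real.exp (20*|a|) * 4^1000)
            * ((2*N).choose ((N:ℤ)+k+s).toNat : ℝ) :=
            mul_le_mul_of_nonneg_right (hExpBound E hEtot) hR0
    · -- s < 0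
      set t : ℕ := (-s).toNat with htdef
      have htz : (t:ℤ) = -s := Int.toNat_of_nonneg (by omega)
      have ht : (t:ℝ) = -(s:ℝ) := by exact_mod_cast htz
      have ht0 : (0:ℝ) ≤ t := by positivity
      have hchain := chain_neg' N hN B h2B t k hkB (by
        rw [ht, show (k:ℝ) - -(s:ℝ) = (k:ℝ) + s by ring]; exact hksB)
      rw [show (N:ℤ) + k - (t:ℤ) = (N:ℤ) + k + s by omega] at hchain
      set E : ℝ := (-2*(k:ℝ)*t + t^2 + t)/N + t*(4*B^3)/N^3 with hEdef
      have htar : -(a*r) ≤ (t:ℝ) := by rw [ht]; linarith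
      have htar2 : (t:ℝ) < -(a*r) + 1 := by rw [ht]; linarith
      have hA : -2*a*(k:ℝ)/r + (-2)*(k:ℝ)*t/N ≤ 1 := by
        have e : -2*a*(k:ℝ)/r + (-2)*(k:ℝ)*t/N = -2*(k:ℝ)*((t:ℝ) + a*r)/N := by
          rw [show (N:ℝ) = r*r from hrr.symm]
          field_simp
          ring
        rw [e, div_le_one hN0]
        have p1 : 0 ≤ (B + (k:ℝ)) * ((t:ℝ) + a*r) :=
          mul_nonneg (by linarith) (by linarith)
        have p2 : 0 ≤ B * (1 - ((t:ℝ) + a*r)) :=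
          mul_nonneg (by linarith) (by linarith)
        nlinarith [p1, p2]
      have htabs : (t:ℝ) ≤ |a| * r + 1 := by
        have : -(a*r) ≤ |a| * r := by
          have := neg_abs_le a
          nlinarith [abs_nonneg a]
        linarith
      have hBclaim : ((t:ℝ)^2 + t)/N ≤ a^2 + 3*|a| + 2 := by
        rw [div_le_iff₀ hN0]
        have h1 : (t:ℝ)^2 ≤ (|a| * r + 1)^2 := by nlinarith [abs_nonneg a]
        have h2 : (|a| * r+1)^2 = a^2*N + 2*|a| * r + 1 := by
          rw [← hrr, ← sq_abs a]; ring
        nlinarith [abs_nonneg a, hN0]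
      have hCclaim : (t:ℝ)*(4*B^3)/N^3 ≤ 4*|a| + 4 := by
        have e : (t:ℝ)*(4*B^3)/(N:ℝ)^3 = 4*(t:ℝ)/r := by
          rw [hN3]; field_simp
        rw [e, div_le_iff₀ hr0]
        nlinarith [abs_nonneg a]
      have hEtot : -2*a*(k:ℝ)/r + E ≤ a^2 + 20*|a| + 10 := by
        have esplit : E = (-2)*(k:ℝ)*t/N + ((t:ℝ)^2 + t)/N + (t:ℝ)*(4*B^3)/N^3 := by
          rw [hEdef]; ring
        rw [esplit]
        have := abs_nonneg a
        linarith
      calc Real.exp (-2*a*(k:ℝ)/r) * ((2*N).choose ((N:ℤ)+k).toNat : ℝ)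
          ≤ Real.exp (-2*a*(k:ℝ)/r) * (Real.exp E * ((2*N).choose ((N:ℤ)+k+s).toNat : ℝ)) :=
            mul_le_mul_of_nonneg_left hchain (Real.exp_nonneg _)
        _ = (Real.exp (-2*a*(k:ℝ)/r) * Real.exp E) * ((2*N).choose ((N:ℤ)+k+s).toNat : ℝ) := by
            ring
        _ ≤ (Real.exp (a^2 + 20*|a| + 10) + Real.exp (20*|a|) * 4^1000)
            * ((2*N).choose ((N:ℤ)+k+s).toNat : ℝ) :=
            mul_le_mul_of_nonneg_right (hExpBound E hEtot) hR0
  · -- small N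
    have hN1000 : N ≤ 1000 := by omega
    have hBr10 : B ≤ 10 * r := by
      have hBr : B = (N:ℝ)^((1:ℝ)/3) * r := by
        rw [hBdef, hr, ← Real.rpow_add hN0]
        norm_num
      have h3 : (N:ℝ)^((1:ℝ)/3) ≤ 10 := by
        calc (N:ℝ)^((1:ℝ)/3) ≤ (1000:ℝ)^((1:ℝ)/3) :=
              Real.rpow_le_rpow hN0.le (by exact_mod_cast hN1000) (by norm_num)
          _ = 10 := by
              rw [show (1000:ℝ) = (10:ℝ)^(3:ℕ) by norm_num, ← Real.rpow_natCast (10:ℝ) 3,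
                ← Real.rpow_mul (by norm_num)]
              norm_num
      rw [hBr]
      nlinarith
    have hexp : Real.exp (-2*a*(k:ℝ)/r) ≤ Real.exp (20*|a|) := by
      apply Real.exp_le_exp.2
      rw [div_le_iff₀ hr0]
      have h1 : -2*a*(k:ℝ) ≤ 2*|a| * |(k:ℝ)| := by
        calc -2*a*(k:ℝ) ≤ |(-2)*a*(k:ℝ)| := le_abs_self _
        _ = 2*|a| * |(k:ℝ)| := by rw [abs_mul, abs_mul]; norm_num
      have h2 : 2*|a| * |(k:ℝ)| ≤ 2*|a| * (10*r) := by
        apply mul_le_mul_of_nonneg_left (le_trans hkB hBr10) (by positivity)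
      nlinarith [abs_nonneg a]
    have hL : ((2*N).choose ((N:ℤ)+k).toNat : ℝ) ≤ 4^1000 := by
      have h1 : (2*N).choose ((N:ℤ)+k).toNat ≤ 2^(2*N) := choose_le_two_pow' _ _
      have h2 : (2:ℕ)^(2*N) ≤ 2^2000 := Nat.pow_le_pow_right (by norm_num) (by omega)
      have h3 : ((2:ℕ)^2000 : ℝ) = 4^1000 := by
        push_cast
        rw [show (4:ℝ) = 2^2 by norm_num, ← pow_mul]
      calc ((2*N).choose ((N:ℤ)+k).toNat : ℝ) ≤ ((2:ℕ)^2000 : ℝ) := by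
            exact_mod_cast le_trans h1 h2
      _ = 4^1000 := h3
    calc Real.exp (-2*a*(k:ℝ)/r) * ((2*N).choose ((N:ℤ)+k).toNat : ℝ)
        ≤ Real.exp (20*|a|) * 4^1000 :=
          mul_le_mul hexp hL (by positivity) (Real.exp_nonneg _)
      _ ≤ (Real.exp (a^2 + 20*|a| + 10) + Real.exp (20*|a|) * 4^1000) * 1 := by
          have : (0:ℝ) < Real.exp (a^2 + 20*|a| + 10) := Real.exp_pos _
          nlinarith
      _ ≤ (Real.exp (a^2 + 20*|a| + 10) + Real.exp (20*|a|) * 4^1000)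
          * ((2*N).choose ((N:ℤ)+k+s).toNat : ℝ) := by
          apply mul_le_mul_of_nonneg_left hR1 (by positivity)
end

section
/- For every integer N ≥ 1 and every integer k with |k| ≤ N, one has 4^{−N} · C(2N, N+k) ≤ N^{−1/2} · exp(−k²/(2N)). -/
/-- Central binomial square bound: `(2N+1) * C(2N,N)^2 ≤ 16^N`. -/
lemma central_sq_bound (N : ℕ) : (2 * N + 1) * ((2 * N).choose N) ^ 2 ≤ 16 ^ N := by
  induction N with
  | zero => simp
  | succ n ih =>
    have hrec : (n + 1) * (2 * (n + 1)).choose (n + 1) = 2 * (2 * n + 1) * ((2 * n).choose n) := by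
      have := Nat.succ_mul_centralBinom_succ n
      simpa [Nat.centralBinom, Nat.mul_succ, mul_comm, mul_left_comm, mul_assoc] using this
    have key : (n + 1) ^ 2 * ((2 * (n + 1) + 1) * ((2 * (n + 1)).choose (n + 1)) ^ 2)
        ≤ (n + 1) ^ 2 * 16 ^ (n + 1) := by
      have h1 : (n + 1) ^ 2 * ((2 * (n + 1) + 1) * ((2 * (n + 1)).choose (n + 1)) ^ 2)
          = (2 * (n + 1) + 1) * ((n + 1) * (2 * (n + 1)).choose (n + 1)) ^ 2 := by ring
      rw [h1, hrec]
      have h2 : (2 * (n + 1) + 1) * (2 * (2 * n + 1) * (2 * n).choose n) ^ 2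
          = (4 * ((2 * n + 1) * (2 * n + 3))) * ((2 * n + 1) * ((2 * n).choose n) ^ 2) := by
        ring
      rw [h2]
      calc (4 * ((2 * n + 1) * (2 * n + 3))) * ((2 * n + 1) * ((2 * n).choose n) ^ 2)
          ≤ (4 * ((2 * n + 2) * (2 * n + 2))) * (16 ^ n) := by
            apply Nat.mul_le_mul
            · apply Nat.mul_le_mul_left
              nlinarith
            · exact ih
        _ = (n + 1) ^ 2 * 16 ^ (n + 1) := by ring
    exact Nat.le_of_mul_le_mul_left key (by positivity)

/-- `C(2N, N+j) ≤ C(2N,N) * exp(-j²/(2N))` for `j ≤ N`. -/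
lemma choose_le_central_mul_exp (N j : ℕ) (hN : 1 ≤ N) (hj : j ≤ N) :
    ((2 * N).choose (N + j) : ℝ) * Real.exp ((j : ℝ) ^ 2 / (2 * N))
      ≤ ((2 * N).choose N : ℝ) := by
  induction j with
  | zero => simp
  | succ m ih =>
    have hm : m ≤ N := le_of_lt (Nat.lt_of_succ_le hj)
    have hmN : m + 1 ≤ N := hj
    have ih' := ih hm
    have hNpos : (0 : ℝ) < N := by exact_mod_cast hN
    -- recurrence
    have hrec : ((2 * N).choose (N + m + 1) : ℝ) * ((N : ℝ) + m + 1)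
        = ((2 * N).choose (N + m) : ℝ) * ((N : ℝ) - m) := by
      have := Nat.choose_succ_right_eq (2 * N) (N + m)
      have h2 : 2 * N - (N + m) = N - m := by omega
      rw [h2] at this
      have hcast := congrArg (Nat.cast : ℕ → ℝ) this
      push_cast [Nat.cast_sub hm] at hcast
      push_cast
      linarith [hcast]
    -- key exponential inequality: (N - m) * exp((2m+1)/(2N)) ≤ N + m + 1
    have hs : (2 * (m : ℝ) + 1) / (2 * N) < 1 := by
      rw [div_lt_one (by positivity)]
      have : (m : ℝ) + 1 ≤ N := by exact_mod_cast hmN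
      linarith
    have hexp : Real.exp ((2 * (m : ℝ) + 1) / (2 * N)) ≤ (2 * N) / (2 * N - (2 * m + 1)) := by
      have h1 : 1 - (2 * (m : ℝ) + 1) / (2 * N) ≤ Real.exp (-((2 * (m : ℝ) + 1) / (2 * N))) := by
        have := Real.add_one_le_exp (-((2 * (m : ℝ) + 1) / (2 * N)))
        linarith
      have hpos : (0 : ℝ) < 1 - (2 * (m : ℝ) + 1) / (2 * N) := by linarith
      have h2 : Real.exp ((2 * (m : ℝ) + 1) / (2 * N))
          ≤ 1 / (1 - (2 * (m : ℝ) + 1) / (2 * N)) := by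
        rw [le_div_iff₀ hpos]
        calc Real.exp ((2 * (m : ℝ) + 1) / (2 * N)) * (1 - (2 * (m : ℝ) + 1) / (2 * N))
            ≤ Real.exp ((2 * (m : ℝ) + 1) / (2 * N)) *
              Real.exp (-((2 * (m : ℝ) + 1) / (2 * N))) := by
              apply mul_le_mul_of_nonneg_left h1 (Real.exp_nonneg _)
          _ = 1 := by rw [← Real.exp_add]; simp
      have heq : (1:ℝ) - (2 * (m : ℝ) + 1) / (2 * N) = (2 * N - (2 * m + 1)) / (2 * N) := by
        field_simp
      calc Real.exp ((2 * (m : ℝ) + 1) / (2 * N)) ≤ 1 / (1 - (2 * (m : ℝ) + 1) / (2 * N)) := h2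
        _ = (2 * N) / (2 * N - (2 * m + 1)) := by rw [heq, one_div_div]
    have hkey : ((N : ℝ) - m) * Real.exp ((2 * (m : ℝ) + 1) / (2 * N)) ≤ (N : ℝ) + m + 1 := by
      have hNm : (0 : ℝ) ≤ (N : ℝ) - m := by
        have : (m : ℝ) ≤ N := by exact_mod_cast hm
        linarith
      have hden : (0 : ℝ) < 2 * N - (2 * m + 1) := by
        have : (m : ℝ) + 1 ≤ N := by exact_mod_cast hmN
        linarith
      calc ((N : ℝ) - m) * Real.exp ((2 * (m : ℝ) + 1) / (2 * N))
          ≤ ((N : ℝ) - m) * ((2 * N) / (2 * N - (2 * m + 1))) :=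
            mul_le_mul_of_nonneg_left hexp hNm
        _ = (((N : ℝ) - m) * (2 * N)) / (2 * N - (2 * m + 1)) := by ring
        _ ≤ (N : ℝ) + m + 1 := by
            rw [div_le_iff₀ hden]
            have hmr : (m : ℝ) + 1 ≤ N := by exact_mod_cast hmN
            nlinarith
    -- combine
    have hsq : ((m : ℝ) + 1) ^ 2 / (2 * N) = (m : ℝ) ^ 2 / (2 * N) + (2 * m + 1) / (2 * N) := by
      field_simp; ring
    have hpos1 : (0 : ℝ) < (N : ℝ) + m + 1 := by positivity
    push_cast
    -- goal: choose (N + (m+1)) * exp((m+1)^2/(2N)) ≤ choose N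
    have step : ((2 * N).choose (N + (m + 1)) : ℝ) * Real.exp (((m : ℝ) + 1) ^ 2 / (2 * N))
        ≤ ((2 * N).choose (N + m) : ℝ) * Real.exp ((m : ℝ) ^ 2 / (2 * N)) := by
      have := mul_le_mul_of_nonneg_left hkey
        (show (0:ℝ) ≤ ((2 * N).choose (N + m) : ℝ) * Real.exp ((m : ℝ) ^ 2 / (2 * N)) /
          ((N : ℝ) + m + 1) by positivity)
      have hNm1 : (N + (m + 1)) = (N + m + 1) := by ring
      rw [hNm1]
      rw [hsq, Real.exp_add]
      have hrec' : ((2 * N).choose (N + m + 1) : ℝ)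
          = ((2 * N).choose (N + m) : ℝ) * ((N : ℝ) - m) / ((N : ℝ) + m + 1) := by
        field_simp
        linarith [hrec]
      rw [hrec']
      calc ((2 * N).choose (N + m) : ℝ) * ((N : ℝ) - m) / ((N : ℝ) + m + 1) *
            (Real.exp ((m : ℝ) ^ 2 / (2 * N)) * Real.exp ((2 * (m : ℝ) + 1) / (2 * N)))
          = ((2 * N).choose (N + m) : ℝ) * Real.exp ((m : ℝ) ^ 2 / (2 * N)) / ((N : ℝ) + m + 1)
            * (((N : ℝ) - m) * Real.exp ((2 * (m : ℝ) + 1) / (2 * N))) := by ring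
        _ ≤ ((2 * N).choose (N + m) : ℝ) * Real.exp ((m : ℝ) ^ 2 / (2 * N)) / ((N : ℝ) + m + 1)
            * ((N : ℝ) + m + 1) := by
            apply mul_le_mul_of_nonneg_left hkey (by positivity)
        _ = ((2 * N).choose (N + m) : ℝ) * Real.exp ((m : ℝ) ^ 2 / (2 * N)) := by
            field_simp
    calc ((2 * N).choose (N + (m + 1)) : ℝ) * Real.exp (((m : ℝ) + 1) ^ 2 / (2 * N))
        ≤ ((2 * N).choose (N + m) : ℝ) * Real.exp ((m : ℝ) ^ 2 / (2 * N)) := step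
      _ ≤ ((2 * N).choose N : ℝ) := ih'

/-- For every integer `N ≥ 1` and every integer `k` with `|k| ≤ N`,
`4^{−N} · C(2N, N+k) ≤ N^{−1/2} · exp(−k²/(2N))`. -/
theorem binomial_gaussian_bound (N : ℕ) (hN : 1 ≤ N) (k : ℤ) (hk : |k| ≤ (N : ℤ)) :
    ((4 : ℝ) ^ N)⁻¹ * ((2 * N).choose ((N : ℤ) + k).toNat : ℝ)
      ≤ (N : ℝ) ^ (-(1 / 2 : ℝ)) * Real.exp (-(k : ℝ) ^ 2 / (2 * N)) := by
  set j : ℕ := k.natAbs with hjdef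
  have hjN : j ≤ N := by
    have := Int.abs_eq_natAbs k
    omega
  have hNpos : (0 : ℝ) < N := by exact_mod_cast hN
  -- the choose value equals choose (N + j)
  have hchoose : (2 * N).choose ((N : ℤ) + k).toNat = (2 * N).choose (N + j) := by
    rcases le_or_gt 0 k with hk0 | hk0
    · congr 1
      have : k = (j : ℤ) := by
        rw [hjdef]; exact (Int.natAbs_of_nonneg hk0).symm
      omega
    · have hkneg : k = -(j : ℤ) := by
        rw [hjdef]
        omega
      have h1 : ((N : ℤ) + k).toNat = N - j := by omega
      rw [h1]
      have h2 : N - j = 2 * N - (N + j) := by omega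
      rw [h2]
      exact Nat.choose_symm (by omega)
  have hk2 : (k : ℝ) ^ 2 = (j : ℝ) ^ 2 := by
    have : (j : ℝ) = |(k : ℝ)| := by
      rw [hjdef, Nat.cast_natAbs]
      exact Int.cast_abs
    rw [this, sq_abs]
  rw [hchoose, hk2]
  -- bound via the two lemmas
  have hA := choose_le_central_mul_exp N j hN hjN
  -- B: ((2N).choose N : ℝ) ≤ 4^N * N^(-(1/2))
  have hB : ((2 * N).choose N : ℝ) ≤ (4 : ℝ) ^ N * (N : ℝ) ^ (-(1 / 2 : ℝ)) := by
    have hnat := central_sq_bound N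
    have hreal : ((N : ℝ)) * ((2 * N).choose N : ℝ) ^ 2 ≤ (16 : ℝ) ^ N := by
      have h1 : (N : ℝ) * ((2 * N).choose N : ℝ) ^ 2
          ≤ ((2 * N : ℝ) + 1) * ((2 * N).choose N : ℝ) ^ 2 := by
        nlinarith [sq_nonneg (((2 * N).choose N : ℝ))]
      calc (N : ℝ) * ((2 * N).choose N : ℝ) ^ 2
          ≤ ((2 * N : ℝ) + 1) * ((2 * N).choose N : ℝ) ^ 2 := h1
        _ ≤ (16 : ℝ) ^ N := by exact_mod_cast hnat
    have hrpow : ((N : ℝ) ^ (-(1 / 2 : ℝ))) ^ 2 = (N : ℝ)⁻¹ := by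
      rw [← Real.rpow_natCast ((N : ℝ) ^ (-(1 / 2 : ℝ))) 2,
        ← Real.rpow_mul (le_of_lt hNpos)]
      norm_num
      exact Real.rpow_neg_one _
    have hnn1 : (0 : ℝ) ≤ ((2 * N).choose N : ℝ) := Nat.cast_nonneg _
    have hnn2 : (0 : ℝ) ≤ (4 : ℝ) ^ N * (N : ℝ) ^ (-(1 / 2 : ℝ)) := by positivity
    have hsq : (((2 * N).choose N : ℝ)) ^ 2 ≤ ((4 : ℝ) ^ N * (N : ℝ) ^ (-(1 / 2 : ℝ))) ^ 2 := by
      rw [mul_pow, hrpow]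
      have h16 : ((4 : ℝ) ^ N) ^ 2 = (16 : ℝ) ^ N := by
        rw [← pow_mul, mul_comm N 2, pow_mul]; norm_num
      rw [h16]
      calc ((2 * N).choose N : ℝ) ^ 2
          = ((N : ℝ) * ((2 * N).choose N : ℝ) ^ 2) * (N : ℝ)⁻¹ := by
            field_simp
        _ ≤ (16 : ℝ) ^ N * (N:ℝ)⁻¹ := by
            apply mul_le_mul_of_nonneg_right hreal (by positivity)
    exact (pow_le_pow_iff_left₀ hnn1 hnn2 (by norm_num)).mp hsq
  -- combine
  have hexp_pos : (0 : ℝ) < Real.exp (-(j : ℝ) ^ 2 / (2 * N)) := Real.exp_pos _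
  have h4pos : (0 : ℝ) < (4 : ℝ) ^ N := by positivity
  have hA' : ((2 * N).choose (N + j) : ℝ)
      ≤ ((2 * N).choose N : ℝ) * Real.exp (-(j : ℝ) ^ 2 / (2 * N)) := by
    calc ((2 * N).choose (N + j) : ℝ)
          = ((2 * N).choose (N + j) : ℝ) * Real.exp ((j : ℝ) ^ 2 / (2 * N)) *
            Real.exp (-(j : ℝ) ^ 2 / (2 * N)) := by
            rw [mul_assoc, ← Real.exp_add]
            simp [neg_div]
        _ ≤ ((2 * N).choose N : ℝ) * Real.exp (-(j : ℝ) ^ 2 / (2 * N)) := by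
            apply mul_le_mul_of_nonneg_right hA (le_of_lt hexp_pos)
  calc ((4 : ℝ) ^ N)⁻¹ * ((2 * N).choose (N + j) : ℝ)
      ≤ ((4 : ℝ) ^ N)⁻¹ * (((2 * N).choose N : ℝ) * Real.exp (-(j : ℝ) ^ 2 / (2 * N))) := by
        apply mul_le_mul_of_nonneg_left hA' (by positivity)
    _ ≤ ((4 : ℝ) ^ N)⁻¹ * ((4 : ℝ) ^ N * (N : ℝ) ^ (-(1 / 2 : ℝ)) *
        Real.exp (-(j : ℝ) ^ 2 / (2 * N))) := by
        apply mul_le_mul_of_nonneg_left _ (by positivity)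
        exact mul_le_mul_of_nonneg_right hB (le_of_lt hexp_pos)
    _ = (N : ℝ) ^ (-(1 / 2 : ℝ)) * Real.exp (-(j : ℝ) ^ 2 / (2 * N)) := by
        field_simp
end

section
/- For every real c ≥ 0 and every natural number p, lim_{N→∞} N^{p} · e^{c√N} · 4^{−N} · ∑_{k=⌈N^{5/6} − c√N⌉}^{N} C(2N, N+k) = 0. -/
open Filter

lemma choose_anti (N : ℕ) : Antitone (fun m => (2*N).choose (N+m)) := by
  apply antitone_nat_of_succ_le
  intro m
  have key := Nat.choose_succ_right_eq (2*N) (N+m)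
  have h2 : 2*N - (N+m) ≤ N+m+1 := by omega
  have h3 : (2*N).choose (N+(m+1)) * (N+m+1) ≤ (2*N).choose (N+m) * (N+m+1) := by
    rw [show N+(m+1) = (N+m)+1 by ring, key]
    exact Nat.mul_le_mul_left _ h2
  exact Nat.le_of_mul_le_mul_right h3 (by omega)

lemma central_le_four_pow (N : ℕ) : ((2*N).choose N : ℝ) ≤ 4^N := by
  have h : (2*N).choose N ≤ 2^(2*N) := by
    calc (2*N).choose N ≤ ∑ m ∈ Finset.range (2*N+1), (2*N).choose m :=
          Finset.single_le_sum (f := fun m => (2*N).choose m) (fun i _ => Nat.zero_le _)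
            (Finset.mem_range.2 (by omega))
      _ = 2^(2*N) := Nat.sum_range_choose (2*N)
  calc ((2*N).choose N : ℝ) ≤ (2:ℝ)^(2*N) := by exact_mod_cast h
    _ = 4^N := by rw [pow_mul]; norm_num

lemma choose_exp_bound (N : ℕ) : ∀ m : ℕ, m ≤ N →
    ((2*N).choose (N+m) : ℝ) ≤ ((2*N).choose N : ℝ) * Real.exp (-(m:ℝ)^2 / (2*N)) := by
  intro m
  induction m with
  | zero => intro _; simp
  | succ m ih =>
    intro hm
    have hm' : m ≤ N := by omega
    have hN : (0:ℝ) < N := by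
      have : 1 ≤ N := by omega
      exact_mod_cast Nat.lt_of_lt_of_le Nat.zero_lt_one this
    have hden : (0:ℝ) < (N:ℝ) + m + 1 := by positivity
    -- cast key identity
    have key : ((2*N).choose (N+(m+1)) : ℝ) * ((N:ℝ)+m+1) =
        ((2*N).choose (N+m) : ℝ) * ((N:ℝ) - m) := by
      have k1 := Nat.choose_succ_right_eq (2*N) (N+m)
      have k2 : 2*N - (N+m) = N - m := by omega
      rw [k2] at k1
      have := congrArg (fun x : ℕ => (x : ℝ)) k1
      push_cast [Nat.cast_sub hm'] at this
      convert this using 2 <;> push_cast <;> ring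
    have heq : ((2*N).choose (N+(m+1)) : ℝ) =
        ((2*N).choose (N+m) : ℝ) * (((N:ℝ) - m) / ((N:ℝ)+m+1)) := by
      field_simp
      linarith [key]
    -- ratio bound
    have hratio : ((N:ℝ) - m) / ((N:ℝ)+m+1) ≤ Real.exp (-(2*(m:ℝ)+1) / (2*N)) := by
      have e1 : ((N:ℝ) - m) / ((N:ℝ)+m+1) = 1 + (-((2*(m:ℝ)+1) / ((N:ℝ)+m+1))) := by
        field_simp
        ring
      have e2 : 1 + (-((2*(m:ℝ)+1) / ((N:ℝ)+m+1))) ≤ Real.exp (-((2*(m:ℝ)+1) / ((N:ℝ)+m+1))) := by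
        linarith [Real.add_one_le_exp (-((2*(m:ℝ)+1) / ((N:ℝ)+m+1)))]
      have e3 : (-((2*(m:ℝ)+1) / ((N:ℝ)+m+1))) ≤ -(2*(m:ℝ)+1) / (2*N) := by
        rw [neg_div, neg_le_neg_iff]
        apply div_le_div_of_nonneg_left (by positivity) hden
        push_cast
        have : (m:ℝ) + 1 ≤ N := by exact_mod_cast hm
        linarith
      calc ((N:ℝ) - m) / ((N:ℝ)+m+1) ≤ Real.exp (-((2*(m:ℝ)+1) / ((N:ℝ)+m+1))) := by
            rw [e1]; exact e2
        _ ≤ Real.exp (-(2*(m:ℝ)+1) / (2*N)) := Real.exp_le_exp.2 e3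
    have hrnonneg : (0:ℝ) ≤ ((N:ℝ) - m) / ((N:ℝ)+m+1) := by
      apply div_nonneg _ hden.le
      have : (m:ℝ) ≤ N := by exact_mod_cast hm'
      linarith
    calc ((2*N).choose (N+(m+1)) : ℝ)
        = ((2*N).choose (N+m) : ℝ) * (((N:ℝ) - m) / ((N:ℝ)+m+1)) := heq
      _ ≤ (((2*N).choose N : ℝ) * Real.exp (-(m:ℝ)^2 / (2*N))) * Real.exp (-(2*(m:ℝ)+1) / (2*N)) := by
          apply mul_le_mul (ih hm') hratio hrnonneg (by positivity)
      _ = ((2*N).choose N : ℝ) * Real.exp (-((m:ℝ)+1)^2 / (2*N)) := by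
          rw [mul_assoc, ← Real.exp_add]
          congr 1
          field_simp
          ring
      _ = ((2*N).choose N : ℝ) * Real.exp (-((m+1:ℕ):ℝ)^2 / (2*N)) := by push_cast; ring_nf


lemma F_tendsto (c : ℝ) (p : ℕ) :
    Tendsto (fun x : ℝ => ((p:ℝ)+1)*Real.log x + c*x^((1:ℝ)/2) + c*x^((1:ℝ)/3) - x^((2:ℝ)/3)/2)
      atTop atBot := by
  have hlog : Tendsto (fun x : ℝ => Real.log x / x^((2:ℝ)/3)) atTop (nhds 0) :=
    (isLittleO_log_rpow_atTop (by norm_num : (0:ℝ) < 2/3)).tendsto_div_nhds_zero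
  have h6 : Tendsto (fun x : ℝ => x ^ (-(1:ℝ)/6)) atTop (nhds 0) := by
    have := tendsto_rpow_neg_atTop (by norm_num : (0:ℝ) < 1/6)
    simpa [neg_div] using this
  have h3 : Tendsto (fun x : ℝ => x ^ (-(1:ℝ)/3)) atTop (nhds 0) := by
    have := tendsto_rpow_neg_atTop (by norm_num : (0:ℝ) < 1/3)
    simpa [neg_div] using this
  have hg : Tendsto (fun x : ℝ => ((p:ℝ)+1)*(Real.log x / x^((2:ℝ)/3)) + c*x^(-(1:ℝ)/6)
      + c*x^(-(1:ℝ)/3) - 1/2) atTop (nhds (((p:ℝ)+1)*0 + c*0 + c*0 - 1/2)) := by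
    exact (((hlog.const_mul _).add (h6.const_mul c)).add (h3.const_mul c)).sub tendsto_const_nhds
  have hlim : (((p:ℝ)+1)*0 + c*0 + c*0 - 1/2) = -(1/2 : ℝ) := by ring
  rw [hlim] at hg
  have hmain := Tendsto.atTop_mul_neg (by norm_num : -(1/2:ℝ) < 0)
    (tendsto_rpow_atTop (by norm_num : (0:ℝ) < 2/3)) hg
  apply hmain.congr'
  filter_upwards [eventually_gt_atTop (0:ℝ)] with x hx
  have hne : x ^ ((2:ℝ)/3) ≠ 0 := (Real.rpow_pos_of_pos hx _).ne'
  have e1 : x^((2:ℝ)/3) * x^(-(1:ℝ)/6) = x^((1:ℝ)/2) := by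
    rw [← Real.rpow_add hx]; norm_num
  have e2 : x^((2:ℝ)/3) * x^(-(1:ℝ)/3) = x^((1:ℝ)/3) := by
    rw [← Real.rpow_add hx]; norm_num
  calc x ^ ((2:ℝ)/3) * (((p:ℝ)+1)*(Real.log x / x^((2:ℝ)/3)) + c*x^(-(1:ℝ)/6)
        + c*x^(-(1:ℝ)/3) - 1/2)
      = ((p:ℝ)+1)*Real.log x * (x^((2:ℝ)/3)/x^((2:ℝ)/3)) + c*(x^((2:ℝ)/3)*x^(-(1:ℝ)/6))
        + c*(x^((2:ℝ)/3)*x^(-(1:ℝ)/3)) - x^((2:ℝ)/3)/2 := by ring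
    _ = ((p:ℝ)+1)*Real.log x + c*x^((1:ℝ)/2) + c*x^((1:ℝ)/3) - x^((2:ℝ)/3)/2 := by
        rw [div_self hne, e1, e2]; ring


set_option maxHeartbeats 1000000 in
/-- For every real `c ≥ 0` and every natural number `p`,
`N^p · e^{c√N} · 4^{−N} · ∑_{k=⌈N^{5/6} − c√N⌉}^{N} C(2N, N+k) → 0` as `N → ∞`. -/
theorem binomial_tail_error_decay (c : ℝ) (hc : 0 ≤ c) (p : ℕ) :
    Tendsto
      (fun N : ℕ =>
        (N : ℝ) ^ p * Real.exp (c * Real.sqrt N) * ((4 : ℝ) ^ N)⁻¹ *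
          ∑ k ∈ Finset.Icc ⌈(N : ℝ) ^ ((5 : ℝ) / 6) - c * Real.sqrt N⌉ (N : ℤ),
            ((2 * N).choose ((N : ℤ) + k).toNat : ℝ))
      atTop (nhds 0) := by
  set F : ℝ → ℝ := fun x => ((p:ℝ)+1)*Real.log x + c*x^((1:ℝ)/2) + c*x^((1:ℝ)/3) - x^((2:ℝ)/3)/2
    with hF
  have hFtendsto : Tendsto F atTop atBot := hF ▸ F_tendsto c p
  have hupper : Tendsto (fun N : ℕ => 2 * Real.exp (F (N:ℝ))) atTop (nhds 0) := by
    have := (Real.tendsto_exp_atBot.comp (hFtendsto.comp tendsto_natCast_atTop_atTop)).const_mul 2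
    simpa using this
  have hev3 : ∀ᶠ N : ℕ in atTop, c + 1 ≤ (N:ℝ)^((1:ℝ)/3) := by
    have : Tendsto (fun N : ℕ => (N:ℝ)^((1:ℝ)/3)) atTop atTop :=
      (tendsto_rpow_atTop (by norm_num : (0:ℝ) < 1/3)).comp tendsto_natCast_atTop_atTop
    exact this.eventually_ge_atTop (c+1)
  apply tendsto_of_tendsto_of_tendsto_of_le_of_le' tendsto_const_nhds hupper
  · -- nonnegativity
    filter_upwards with N
    have : (0:ℝ) ≤ ∑ k ∈ Finset.Icc ⌈(N : ℝ) ^ ((5 : ℝ) / 6) - c * Real.sqrt N⌉ (N : ℤ),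
        ((2 * N).choose ((N : ℤ) + k).toNat : ℝ) :=
      Finset.sum_nonneg fun k _ => Nat.cast_nonneg _
    positivity
  · filter_upwards [eventually_ge_atTop 1, hev3] with N h1 h2
    have hN0 : (0:ℝ) < N := by exact_mod_cast h1
    set a : ℝ := (N : ℝ) ^ ((5 : ℝ) / 6) - c * Real.sqrt N with ha
    set k₀ : ℤ := ⌈a⌉ with hk₀
    have hsqrt : Real.sqrt N = (N:ℝ)^((1:ℝ)/2) := Real.sqrt_eq_rpow _
    have hs1 : 1 ≤ (N:ℝ)^((1:ℝ)/2) := Real.one_le_rpow (by exact_mod_cast h1) (by norm_num)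
    have e56 : (N:ℝ)^((5:ℝ)/6) = (N:ℝ)^((1:ℝ)/2) * (N:ℝ)^((1:ℝ)/3) := by
      rw [← Real.rpow_add hN0]; norm_num
    have ha1 : 1 ≤ a := by
      rw [ha, hsqrt, e56]
      nlinarith [hs1, h2, hc]
    have hk₀1 : 1 ≤ k₀ := by
      rw [hk₀, show (1:ℤ) = ⌈(1:ℝ)⌉ by simp]
      exact Int.ceil_le_ceil ha1
    have hak : a ≤ ((k₀.toNat : ℤ) : ℝ) := by
      rw [Int.toNat_of_nonneg (by omega)]
      exact Int.le_ceil a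
    have hak' : a ≤ (k₀.toNat : ℝ) := by exact_mod_cast hak
    set B : ℝ := (4:ℝ)^N * Real.exp (-(a^2) / (2*(N:ℝ))) with hB
    have hterm : ∀ k ∈ Finset.Icc k₀ (N:ℤ), ((2*N).choose ((N:ℤ)+k).toNat : ℝ) ≤ B := by
      intro k hk
      obtain ⟨hka, hkb⟩ := Finset.mem_Icc.1 hk
      have htn : ((N:ℤ)+k).toNat = N + k.toNat := by omega
      rw [htn]
      have h₀n : k₀.toNat ≤ k.toNat := by omega
      have hkN : k₀.toNat ≤ N := by omega
      calc ((2*N).choose (N + k.toNat) : ℝ) ≤ ((2*N).choose (N + k₀.toNat) : ℝ) := by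
            exact_mod_cast choose_anti N h₀n
        _ ≤ ((2*N).choose N : ℝ) * Real.exp (-((k₀.toNat:ℝ))^2/(2*(N:ℝ))) :=
            choose_exp_bound N _ hkN
        _ ≤ B := by
            rw [hB]
            apply mul_le_mul (central_le_four_pow N) _ (Real.exp_pos _).le (by positivity)
            apply Real.exp_le_exp.2
            have ha0 : (0:ℝ) ≤ a := by linarith
            have : a^2 ≤ ((k₀.toNat:ℝ))^2 := by nlinarith
            have h2N : (0:ℝ) < 2*(N:ℝ) := by linarith
            rw [div_le_div_iff₀ h2N h2N]
            nlinarith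
    have hBpos : 0 < B := by positivity
    have hcard : ((Finset.Icc k₀ (N:ℤ)).card : ℝ) ≤ (N:ℝ) + 1 := by
      have := Int.card_Icc k₀ (N:ℤ)
      have hle : (Finset.Icc k₀ (N:ℤ)).card ≤ N + 1 := by
        rw [this]; omega
      exact_mod_cast hle
    have hsum : ∑ k ∈ Finset.Icc k₀ (N:ℤ), ((2*N).choose ((N:ℤ)+k).toNat : ℝ)
        ≤ ((N:ℝ)+1) * B := by
      calc ∑ k ∈ Finset.Icc k₀ (N:ℤ), ((2*N).choose ((N:ℤ)+k).toNat : ℝ)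
          ≤ (Finset.Icc k₀ (N:ℤ)).card • B := Finset.sum_le_card_nsmul _ _ _ hterm
        _ = ((Finset.Icc k₀ (N:ℤ)).card : ℝ) * B := nsmul_eq_mul _ _
        _ ≤ ((N:ℝ)+1) * B := mul_le_mul_of_nonneg_right hcard hBpos.le
    have h4 : ((4:ℝ)^N) ≠ 0 := by positivity
    have step1 : (N : ℝ) ^ p * Real.exp (c * Real.sqrt N) * ((4 : ℝ) ^ N)⁻¹ *
          ∑ k ∈ Finset.Icc k₀ (N:ℤ), ((2 * N).choose ((N : ℤ) + k).toNat : ℝ)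
        ≤ (N:ℝ)^p * ((N:ℝ)+1) * Real.exp (c * Real.sqrt N - a^2 / (2*(N:ℝ))) := by
      have hmul : (N : ℝ) ^ p * Real.exp (c * Real.sqrt N) * ((4 : ℝ) ^ N)⁻¹ *
            (((N:ℝ)+1) * B)
          = (N:ℝ)^p * ((N:ℝ)+1) * Real.exp (c * Real.sqrt N - a^2 / (2*(N:ℝ))) := by
        rw [hB, Real.exp_sub]
        have hexp : Real.exp (-(a^2) / (2*(N:ℝ))) =
            (Real.exp (a^2 / (2*(N:ℝ))))⁻¹ := by
          rw [← Real.exp_neg]; ring_nf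
        rw [hexp]
        field_simp
      rw [← hmul]
      apply mul_le_mul_of_nonneg_left hsum (by positivity)
    -- exponent bound
    have hexpbd : c * Real.sqrt N - a^2 / (2*(N:ℝ))
        ≤ c*(N:ℝ)^((1:ℝ)/2) + c*(N:ℝ)^((1:ℝ)/3) - (N:ℝ)^((2:ℝ)/3)/2 := by
      rw [hsqrt]
      have e1 : (N:ℝ)^((5:ℝ)/6) * (N:ℝ)^((5:ℝ)/6) = (N:ℝ)^((2:ℝ)/3) * (N:ℝ) := by
        rw [← Real.rpow_add hN0, show (5:ℝ)/6+5/6 = 2/3 + 1 by norm_num,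
          Real.rpow_add hN0, Real.rpow_one]
      have e2 : (N:ℝ)^((5:ℝ)/6) * (N:ℝ)^((1:ℝ)/2) = (N:ℝ)^((1:ℝ)/3) * (N:ℝ) := by
        rw [← Real.rpow_add hN0, show (5:ℝ)/6+1/2 = 1/3 + 1 by norm_num,
          Real.rpow_add hN0, Real.rpow_one]
      have e3 : (N:ℝ)^((1:ℝ)/2) * (N:ℝ)^((1:ℝ)/2) = (N:ℝ) := by
        rw [← Real.rpow_add hN0]; norm_num
      have hx : ((N:ℝ)^((5:ℝ)/6) - c*(N:ℝ)^((1:ℝ)/2))^2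
          = (N:ℝ)^((2:ℝ)/3)*(N:ℝ) - 2*c*((N:ℝ)^((1:ℝ)/3)*(N:ℝ)) + c^2*(N:ℝ) := by
        calc ((N:ℝ)^((5:ℝ)/6) - c*(N:ℝ)^((1:ℝ)/2))^2
            = (N:ℝ)^((5:ℝ)/6)*(N:ℝ)^((5:ℝ)/6) - 2*c*((N:ℝ)^((5:ℝ)/6)*(N:ℝ)^((1:ℝ)/2))
              + c^2*((N:ℝ)^((1:ℝ)/2)*(N:ℝ)^((1:ℝ)/2)) := by ring
          _ = (N:ℝ)^((2:ℝ)/3)*(N:ℝ) - 2*c*((N:ℝ)^((1:ℝ)/3)*(N:ℝ)) + c^2*(N:ℝ) := by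
              rw [e1, e2, e3]
      have hsq : ((N:ℝ)^((2:ℝ)/3) - 2*c*(N:ℝ)^((1:ℝ)/3)) * (N:ℝ) ≤ a^2 := by
        rw [ha, hsqrt, hx]
        have hcc : 0 ≤ c^2*(N:ℝ) := by positivity
        linarith
      have hdiv : (N:ℝ)^((2:ℝ)/3)/2 - c*(N:ℝ)^((1:ℝ)/3) ≤ a^2 / (2*(N:ℝ)) := by
        rw [le_div_iff₀ (by linarith : (0:ℝ) < 2*(N:ℝ))]
        linarith [hsq]
      linarith
    have hpoly : (N:ℝ)^p * ((N:ℝ)+1) ≤ 2 * Real.exp (((p:ℝ)+1) * Real.log N) := by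
      have hrw : Real.exp (((p:ℝ)+1) * Real.log N) = (N:ℝ)^(p+1) := by
        rw [show ((p:ℝ)+1) * Real.log N = ((p+1 : ℕ):ℝ) * Real.log N by push_cast; ring,
          Real.exp_nat_mul, Real.exp_log hN0]
      rw [hrw]
      have h1N : (1:ℝ) ≤ N := by exact_mod_cast h1
      have hp0 : (0:ℝ) ≤ (N:ℝ)^p := by positivity
      calc (N:ℝ)^p * ((N:ℝ)+1) ≤ (N:ℝ)^p * (2*(N:ℝ)) := by nlinarith
        _ = 2 * (N:ℝ)^(p+1) := by ring
    calc (N : ℝ) ^ p * Real.exp (c * Real.sqrt N) * ((4 : ℝ) ^ N)⁻¹ *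
          ∑ k ∈ Finset.Icc k₀ (N:ℤ), ((2 * N).choose ((N : ℤ) + k).toNat : ℝ)
        ≤ (N:ℝ)^p * ((N:ℝ)+1) * Real.exp (c * Real.sqrt N - a^2 / (2*(N:ℝ))) := step1
      _ ≤ (2 * Real.exp (((p:ℝ)+1) * Real.log N)) *
            Real.exp (c*(N:ℝ)^((1:ℝ)/2) + c*(N:ℝ)^((1:ℝ)/3) - (N:ℝ)^((2:ℝ)/3)/2) := by
          apply mul_le_mul hpoly (Real.exp_le_exp.2 hexpbd) (Real.exp_pos _).le (by positivity)
      _ = 2 * Real.exp (F (N:ℝ)) := by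
          simp only [hF]
          rw [mul_assoc, ← Real.exp_add]
          congr 1
          ring
end

section
/- Let L > 0 and let u, v be real numbers with u + v > 0. Let (B_t)_{t∈[0,L]} be a standard one-dimensional Brownian motion started at 0. Then the partition function 𝒵_{u,v} := ∫_{−∞}^{∞} E[ exp( −2(u+v)x − 2v·B_L − e^{−2x} ∫₀^L e^{−2B_t} dt ) ] dx is finite. -/
open MeasureTheory ProbabilityTheory Real Set Filter
open scoped ENNReal NNReal Topology

lemma aux_lintegral_exp_gaussianReal (c : ℝ) (v : ℝ≥0) :
    ∫⁻ y, ENNReal.ofReal (Real.exp (c * y)) ∂(gaussianReal 0 v)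
      = ENNReal.ofReal (Real.exp (c ^ 2 * v / 2)) := by
  rcases eq_or_ne v 0 with hv | hv
  · subst hv
    simp [gaussianReal_zero_var, lintegral_dirac]
  · have hv0 : (v : ℝ) ≠ 0 := by exact_mod_cast hv
    rw [gaussianReal_of_var_ne_zero _ hv,
      lintegral_withDensity_eq_lintegral_mul _ (measurable_gaussianPDF _ _)
        (by fun_prop)]
    have key : ∀ y : ℝ, gaussianPDF 0 v y * ENNReal.ofReal (Real.exp (c * y))
        = ENNReal.ofReal (Real.exp (c ^ 2 * v / 2)) * gaussianPDF (c * v) v y := by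
      intro y
      rw [gaussianPDF, gaussianPDF, ← ENNReal.ofReal_mul (gaussianPDFReal_nonneg _ _ _),
        ← ENNReal.ofReal_mul (Real.exp_nonneg _)]
      congr 1
      simp only [gaussianPDFReal]
      have hexp : Real.exp (-(y - 0) ^ 2 / (2 * v)) * Real.exp (c * y)
          = Real.exp (c ^ 2 * v / 2) * Real.exp (-(y - c * v) ^ 2 / (2 * v)) := by
        rw [← Real.exp_add, ← Real.exp_add]
        congr 1
        field_simp
        ring
      calc (√(2 * π * v))⁻¹ * Real.exp (-(y - 0) ^ 2 / (2 * v)) * Real.exp (c * y)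
          = (√(2 * π * v))⁻¹ * (Real.exp (-(y - 0) ^ 2 / (2 * v)) * Real.exp (c * y)) := by ring
        _ = (√(2 * π * v))⁻¹ * (Real.exp (c ^ 2 * v / 2) * Real.exp (-(y - c * v) ^ 2 / (2 * v))) := by rw [hexp]
        _ = Real.exp (c ^ 2 * v / 2) * ((√(2 * π * v))⁻¹ * Real.exp (-(y - c * v) ^ 2 / (2 * v))) := by ring
    simp only [Pi.mul_apply, key]
    rw [lintegral_const_mul' _ _ ENNReal.ofReal_ne_top, lintegral_gaussianPDF_eq_one _ hv, mul_one]

lemma aux_modification {Ω : Type*} [MeasureSpace Ω] [IsProbabilityMeasure (volume : Measure Ω)]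
    (B : ℝ → Ω → ℝ)
    (hcont : ∀ ω, Continuous fun t => B t ω)
    (hAE : ∀ t : ℝ, 0 ≤ t → AEMeasurable (B t) (volume : Measure Ω)) :
    ∃ f : ℝ → Ω → ℝ, Measurable (Function.uncurry f) ∧ (∀ ω, Continuous fun t => f t ω) ∧
      (∀ᵐ ω : Ω, ∀ t : ℝ, 0 ≤ t → f t ω = B t ω) := by
  classical
  set g : ℚ → Ω → ℝ := fun q => if h : (0:ℝ) ≤ (q:ℝ) then (hAE _ h).mk (B q) else 0 with hg
  have hg_meas : ∀ q, Measurable (g q) := by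
    intro q
    rw [hg]
    dsimp only
    split_ifs with h
    · exact (hAE _ h).measurable_mk
    · exact measurable_const
  have hg_eq : ∀ q : ℚ, (0:ℝ) ≤ (q:ℝ) → B q =ᵐ[volume] g q := by
    intro q h
    rw [hg]
    simp only [dif_pos h]
    exact (hAE _ h).ae_eq_mk
  set N₀ : Set Ω := ⋃ q : ℚ, {ω | (0:ℝ) ≤ (q:ℝ) ∧ B q ω ≠ g q ω} with hN₀def
  have hN₀ : volume N₀ = 0 := by
    refine measure_iUnion_null fun q => ?_
    by_cases h : (0:ℝ) ≤ (q:ℝ)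
    · refine measure_mono_null (fun ω hω => hω.2) (hg_eq q h)
    · exact measure_mono_null (fun ω hω => (h hω.1).elim) measure_empty
  set N : Set Ω := toMeasurable volume N₀ with hNdef
  have hN_meas : MeasurableSet N := measurableSet_toMeasurable _ _
  have hN_null : volume N = 0 := by rw [hNdef, measure_toMeasurable]; exact hN₀
  refine ⟨fun t ω => if ω ∈ N then 0 else B (max t 0) ω, ?_, ?_, ?_⟩
  · -- joint measurability
    refine measurable_uncurry_of_continuous_of_measurable (fun ω => ?_) (fun t => ?_)
    · by_cases hω : ω ∈ N
      · simp only [if_pos hω]; exact continuous_const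
      · simp only [if_neg hω]
        exact (hcont ω).comp (continuous_id.max continuous_const)
    · -- Measurable (fun ω => if ω ∈ N then 0 else B (max t 0) ω)
      set t' : ℝ := max t 0 with ht'
      have ht'0 : 0 ≤ t' := le_max_right _ _
      set q : ℕ → ℚ := fun n => (⌈t' * (n+1)⌉₊ : ℚ) / (n+1) with hq
      have hq_nonneg : ∀ n, (0:ℝ) ≤ (q n : ℝ) := by
        intro n
        rw [hq]
        push_cast
        positivity
      have hq_ge : ∀ n, t' ≤ (q n : ℝ) := by
        intro n
        rw [hq]
        push_cast
        rw [le_div_iff₀ (by positivity)]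
        exact Nat.le_ceil _
      have hq_le : ∀ n, (q n : ℝ) ≤ t' + 1/(n+1) := by
        intro n
        rw [hq]
        push_cast
        rw [div_le_iff₀ (by positivity)]
        have := (Nat.ceil_lt_add_one (by positivity : (0:ℝ) ≤ t' * (n+1))).le
        calc (⌈t' * (n+1)⌉₊ : ℝ) ≤ t' * (n+1) + 1 := this
          _ = (t' + 1/(n+1)) * (n+1) := by field_simp
      have hq_tendsto : Tendsto (fun n => ((q n : ℝ))) atTop (nhds t') := by
        refine tendsto_of_tendsto_of_tendsto_of_le_of_le (g := fun _ : ℕ => t')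
          (h := fun n : ℕ => t' + 1/((n:ℝ)+1)) tendsto_const_nhds ?_ hq_ge hq_le
        have h1 : Tendsto (fun n : ℕ => 1/((n:ℝ)+1)) atTop (nhds 0) :=
          tendsto_one_div_add_atTop_nhds_zero_nat
        simpa using tendsto_const_nhds.add h1
      have hFn_meas : ∀ n, Measurable (fun ω => if ω ∈ N then 0 else g (q n) ω) := by
        intro n
        exact Measurable.ite hN_meas measurable_const (hg_meas _)
      refine measurable_of_tendsto_metrizable hFn_meas (tendsto_pi_nhds.mpr fun ω => ?_)
      by_cases hω : ω ∈ N
      · simp only [if_pos hω]; exact tendsto_const_nhds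
      · simp only [if_neg hω]
        have hωN₀ : ω ∉ N₀ := fun h => hω (subset_toMeasurable _ _ h)
        have hBg : ∀ n, g (q n) ω = B (q n) ω := by
          intro n
          by_contra hne
          exact hωN₀ (Set.mem_iUnion.mpr ⟨q n, hq_nonneg n, fun h => hne h.symm⟩)
        simp only [hBg]
        exact ((hcont ω).tendsto t').comp hq_tendsto
  · intro ω
    by_cases hω : ω ∈ N
    · simp only [if_pos hω]; exact continuous_const
    · simp only [if_neg hω]
      exact (hcont ω).comp (continuous_id.max continuous_const)
  · have : ∀ᵐ ω : Ω, ω ∉ N := by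
      rw [← compl_mem_ae_iff] at hN_null
      exact hN_null
    filter_upwards [this] with ω hω t ht
    simp only [if_neg hω, max_eq_left ht]

lemma aux_moment {Ω : Type*} [MeasureSpace Ω] {X : Ω → ℝ} {t : ℝ} (ht : 0 ≤ t)
    (hmap : Measure.map X (volume : Measure Ω) = gaussianReal 0 t.toNNReal) (c : ℝ) :
    ∫⁻ ω, ENNReal.ofReal (Real.exp (c * X ω)) = ENNReal.ofReal (Real.exp (c ^ 2 * t / 2)) := by
  have hXae : AEMeasurable X (volume : Measure Ω) := by
    by_contra h
    rw [Measure.map_of_not_aemeasurable h] at hmap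
    have h1 : (0 : Measure ℝ) Set.univ = gaussianReal 0 t.toNNReal Set.univ := by rw [hmap]
    simp at h1
  have h2 := (lintegral_map' (f := fun y => ENNReal.ofReal (Real.exp (c * y)))
    (g := X) (by fun_prop) hXae).symm
  rw [hmap] at h2
  rw [h2, aux_lintegral_exp_gaussianReal, Real.coe_toNNReal _ ht]

lemma aux_K1 {a : ℝ} (ha : 0 < a) :
    ∫⁻ x in Set.Ici (0:ℝ), ENNReal.ofReal (Real.exp (-(a * x))) < ⊤ := by
  rw [setLIntegral_congr (Filter.EventuallyEq.symm MeasureTheory.Ioi_ae_eq_Ici)]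
  have hint : IntegrableOn (fun x => Real.exp (-a * x)) (Set.Ioi (0:ℝ)) :=
    exp_neg_integrableOn_Ioi 0 ha
  have h2 := hint.lintegral_lt_top
  simpa [neg_mul] using h2

lemma aux_K3 {b : ℝ} (hb : 0 < b) :
    ∫⁻ x in Set.Iio (0:ℝ), ENNReal.ofReal (Real.exp (b * x)) < ⊤ := by
  have hmp : MeasurePreserving (fun x : ℝ => -x) volume volume :=
    Measure.measurePreserving_neg _
  have hpre : (fun x : ℝ => -x) ⁻¹' (Set.Iio 0) = Set.Ioi 0 := by ext x; simp
  have h1 := hmp.setLIntegral_comp_preimage (s := Set.Iio (0:ℝ)) measurableSet_Iio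
    (f := fun x => ENNReal.ofReal (Real.exp (b * x))) (by fun_prop)
  rw [hpre] at h1
  rw [← h1]
  have hint : IntegrableOn (fun x => Real.exp (-b * x)) (Set.Ioi (0:ℝ)) :=
    exp_neg_integrableOn_Ioi 0 hb
  have h2 := hint.lintegral_lt_top
  have : ∀ x : ℝ, Real.exp (b * -x) = Real.exp (-b * x) := by intro x; ring_nf
  simp only [this]
  simpa using h2

/-- the basic real inequality `exp (-z) ≤ k^k * (z⁻¹)^k` for `z > 0`, `1 ≤ k`. -/
lemma aux_exp_bound {z : ℝ} (hz : 0 < z) {k : ℕ} (hk : 1 ≤ k) :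
    Real.exp (-z) ≤ (k:ℝ)^k * (z⁻¹)^k := by
  have hk0 : (0:ℝ) < k := by exact_mod_cast hk
  have h1 : z / k ≤ Real.exp (z / k) :=
    le_trans (by linarith) (Real.add_one_le_exp _)
  have h2 : z ≤ (k:ℝ) * Real.exp (z / k) := by
    rw [← div_le_iff₀' hk0]
    exact h1
  have h3 : z ^ k ≤ ((k:ℝ) * Real.exp (z / k)) ^ k :=
    pow_le_pow_left₀ hz.le h2 k
  have h4 : ((k:ℝ) * Real.exp (z / k)) ^ k = (k:ℝ)^k * Real.exp z := by
    rw [mul_pow, ← Real.exp_nat_mul]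
    congr 2
    field_simp
  rw [h4] at h3
  have h5 : Real.exp (-z) = (Real.exp z)⁻¹ := Real.exp_neg z
  rw [h5, inv_pow, ← div_eq_mul_inv, le_div_iff₀ (by positivity)]
  calc (Real.exp z)⁻¹ * z ^ k ≤ (Real.exp z)⁻¹ * ((k:ℝ)^k * Real.exp z) :=
        mul_le_mul_of_nonneg_left h3 (inv_nonneg.mpr (Real.exp_pos z).le)
    _ = (k:ℝ)^k := by field_simp

lemma aux_inner {a : ℝ} (_ha : 0 < a) {k : ℕ} (hk : 1 ≤ k) {c : ℝ} (hc : 0 < c) :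
    ∫⁻ x : ℝ, ENNReal.ofReal (Real.exp (-(a * x) - Real.exp (-2*x) * c))
      ≤ (∫⁻ x in Set.Ici (0:ℝ), ENNReal.ofReal (Real.exp (-(a * x))))
        + ENNReal.ofReal ((k:ℝ)^k * (c⁻¹)^k) *
          ∫⁻ x in Set.Iio (0:ℝ), ENNReal.ofReal (Real.exp ((2*k - a) * x)) := by
  rw [← lintegral_add_compl (μ := volume)
    (fun x => ENNReal.ofReal (Real.exp (-(a * x) - Real.exp (-2*x) * c))) measurableSet_Ici,
    Set.compl_Ici]
  refine add_le_add ?_ ?_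
  · refine setLIntegral_mono (by fun_prop) fun x _ => ENNReal.ofReal_le_ofReal ?_
    refine Real.exp_le_exp.mpr ?_
    have : 0 ≤ Real.exp (-2*x) * c := by positivity
    linarith
  · calc ∫⁻ x in Set.Iio (0:ℝ), ENNReal.ofReal (Real.exp (-(a * x) - Real.exp (-2*x) * c))
        ≤ ∫⁻ x in Set.Iio (0:ℝ),
            ENNReal.ofReal ((k:ℝ)^k * (c⁻¹)^k * Real.exp ((2*k - a) * x)) := by
          refine setLIntegral_mono (by fun_prop) fun x _ => ENNReal.ofReal_le_ofReal ?_
          have hz : 0 < Real.exp (-2*x) * c := by positivity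
          have h1 : Real.exp (-(a * x) - Real.exp (-2*x) * c)
              = Real.exp (-(a*x)) * Real.exp (-(Real.exp (-2*x) * c)) := by
            rw [← Real.exp_add]; ring_nf
          have h2 := aux_exp_bound hz hk
          have h4 : Real.exp (-(a*x)) * ((Real.exp (-2*x))⁻¹)^k = Real.exp ((2*k - a)*x) := by
            rw [← Real.exp_neg, ← Real.exp_nat_mul, ← Real.exp_add]
            congr 1
            ring
          calc Real.exp (-(a * x) - Real.exp (-2*x) * c)
              = Real.exp (-(a*x)) * Real.exp (-(Real.exp (-2*x) * c)) := h1
            _ ≤ Real.exp (-(a*x)) * ((k:ℝ)^k * ((Real.exp (-2*x) * c)⁻¹)^k) :=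
                mul_le_mul_of_nonneg_left h2 (Real.exp_nonneg _)
            _ = (k:ℝ)^k * (c⁻¹)^k * (Real.exp (-(a*x)) * ((Real.exp (-2*x))⁻¹)^k) := by
                rw [mul_inv, mul_pow]; ring
            _ = (k:ℝ)^k * (c⁻¹)^k * Real.exp ((2*k - a)*x) := by rw [h4]
      _ = ENNReal.ofReal ((k:ℝ)^k * (c⁻¹)^k) *
            ∫⁻ x in Set.Iio (0:ℝ), ENNReal.ofReal (Real.exp ((2*k - a) * x)) := by
          simp_rw [ENNReal.ofReal_mul (by positivity : (0:ℝ) ≤ (k:ℝ)^k * (c⁻¹)^k)]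
          rw [lintegral_const_mul' _ _ ENNReal.ofReal_ne_top]

lemma aux_holder {h : ℝ → ℝ} (hcont : Continuous h) {L : ℝ} (hL : 0 < L) {k : ℕ} (hk : 1 ≤ k) :
    ENNReal.ofReal (((∫ t in Set.Ioc (0:ℝ) L, Real.exp (-2 * h t))⁻¹)^k)
      ≤ ((ENNReal.ofReal L) ^ (k+1))⁻¹ *
          ∫⁻ t in Set.Ioc (0:ℝ) L, ENNReal.ofReal (Real.exp (2*k* h t)) := by
  set μ := volume.restrict (Set.Ioc (0:ℝ) L) with hμ
  set I : ℝ := ∫ t in Set.Ioc (0:ℝ) L, Real.exp (-2 * h t) with hI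
  set Bk : ℝ≥0∞ := ∫⁻ t in Set.Ioc (0:ℝ) L, ENNReal.ofReal (Real.exp (2*k* h t)) with hBk
  have hk0 : (0:ℝ) < k := by exact_mod_cast hk
  have hIone : IntegrableOn (fun t => Real.exp (-2 * h t)) (Set.Ioc 0 L) :=
    (Continuous.integrableOn_Ioc (by fun_prop))
  have hI_pos : 0 < I := by
    rw [hI, ← intervalIntegral.integral_of_le hL.le]
    refine intervalIntegral.intervalIntegral_pos_of_pos ?_ (fun x => Real.exp_pos _) hL
    exact (Continuous.intervalIntegrable (by fun_prop) _ _)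
  have hA : ENNReal.ofReal I = ∫⁻ t, ENNReal.ofReal (Real.exp (-2 * h t)) ∂μ := by
    rw [hI, hμ]
    exact ofReal_integral_eq_lintegral_ofReal hIone
      (Filter.Eventually.of_forall fun t => Real.exp_nonneg _)
  set A : ℝ≥0∞ := ∫⁻ t, ENNReal.ofReal (Real.exp (-2 * h t)) ∂μ with hAdef
  -- Hölder
  have hpq : Real.HolderConjugate (((k:ℝ)+1)/k) ((k:ℝ)+1) := by
    rw [Real.holderConjugate_iff]
    constructor
    · rw [lt_div_iff₀ hk0]; linarith
    · rw [inv_div]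
      field_simp
  set r : ℝ := (k:ℝ)/((k:ℝ)+1) with hr
  have hmain : ∫⁻ t, ((fun t => ENNReal.ofReal (Real.exp (-2 * h t * r))) *
        (fun t => ENNReal.ofReal (Real.exp (2 * h t * r)))) t ∂μ
      ≤ (∫⁻ t, ENNReal.ofReal (Real.exp (-2 * h t * r)) ^ (((k:ℝ)+1)/k) ∂μ) ^ (1/((((k:ℝ)+1))/k))
        * (∫⁻ t, ENNReal.ofReal (Real.exp (2 * h t * r)) ^ ((k:ℝ)+1) ∂μ) ^ (1/((k:ℝ)+1)) :=
    ENNReal.lintegral_mul_le_Lp_mul_Lq μ hpq (by fun_prop) (by fun_prop)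
  have hfg : ∀ t, ((fun t => ENNReal.ofReal (Real.exp (-2 * h t * r))) *
        (fun t => ENNReal.ofReal (Real.exp (2 * h t * r)))) t = 1 := by
    intro t
    simp only [Pi.mul_apply]
    rw [← ENNReal.ofReal_mul (Real.exp_nonneg _), ← Real.exp_add]
    norm_num
  have hopow : ∀ (y : ℝ) (s : ℝ), ENNReal.ofReal (Real.exp y) ^ s
      = ENNReal.ofReal (Real.exp (y * s)) := by
    intro y s
    rw [ENNReal.ofReal_rpow_of_pos (Real.exp_pos _), ← Real.exp_mul]
  have hfp : ∀ t, ENNReal.ofReal (Real.exp (-2 * h t * r)) ^ (((k:ℝ)+1)/k)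
      = ENNReal.ofReal (Real.exp (-2 * h t)) := by
    intro t
    rw [hopow]
    congr 1
    have hrmul : r * (((k:ℝ)+1)/k) = 1 := by rw [hr]; field_simp
    rw [mul_assoc, hrmul, mul_one]
  have hgq : ∀ t, ENNReal.ofReal (Real.exp (2 * h t * r)) ^ ((k:ℝ)+1)
      = ENNReal.ofReal (Real.exp (2*k* h t)) := by
    intro t
    rw [hopow]
    congr 1
    have hrmul : r * ((k:ℝ)+1) = k := by rw [hr]; field_simp
    rw [mul_assoc, hrmul]
    ring
  simp_rw [hfg, hfp, hgq] at hmain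
  rw [lintegral_one, hμ, Measure.restrict_apply_univ, Real.volume_Ioc, sub_zero] at hmain
  rw [← hAdef, ← hBk] at hmain
  have h1p : 1/((((k:ℝ)+1))/k) = (k:ℝ)/((k:ℝ)+1) := by rw [one_div, inv_div]
  rw [h1p] at hmain
  -- raise to the power k+1
  have hk1 : (0:ℝ) ≤ (k:ℝ)+1 := by positivity
  have hmain2 := ENNReal.rpow_le_rpow hmain hk1
  rw [ENNReal.mul_rpow_of_nonneg _ _ hk1, ← ENNReal.rpow_mul, ← ENNReal.rpow_mul] at hmain2
  have e1 : (k:ℝ)/((k:ℝ)+1) * ((k:ℝ)+1) = (k:ℝ) := by field_simp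
  have e2 : 1/((k:ℝ)+1) * ((k:ℝ)+1) = 1 := by field_simp
  rw [e1, e2, ENNReal.rpow_one, ENNReal.rpow_natCast] at hmain2
  have hmain3 : (ENNReal.ofReal L) ^ (k+1) ≤ A ^ k * Bk := by
    have : ENNReal.ofReal L ^ ((k:ℝ)+1) = ENNReal.ofReal L ^ (k+1) := by
      rw [show ((k:ℝ)+1) = ((k+1 : ℕ) : ℝ) by push_cast; ring, ENNReal.rpow_natCast]
    rwa [this] at hmain2
  -- conclude
  have hA0 : A ≠ 0 := by
    rw [← hA]
    simp only [ne_eq, ENNReal.ofReal_eq_zero, not_le]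
    exact hI_pos
  have hAtop : A ≠ ⊤ := by rw [← hA]; exact ENNReal.ofReal_ne_top
  have hX0 : A ^ k ≠ 0 := pow_ne_zero _ hA0
  have hXtop : A ^ k ≠ ⊤ := by
    exact ENNReal.pow_ne_top hAtop
  have hY0 : (ENNReal.ofReal L) ^ (k+1) ≠ 0 :=
    pow_ne_zero _ (by simp only [ne_eq, ENNReal.ofReal_eq_zero, not_le]; exact hL)
  have hYtop : (ENNReal.ofReal L) ^ (k+1) ≠ ⊤ := ENNReal.pow_ne_top ENNReal.ofReal_ne_top
  have hgoal : (A ^ k)⁻¹ ≤ ((ENNReal.ofReal L) ^ (k+1))⁻¹ * Bk := by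
    have step1 : (ENNReal.ofReal L) ^ (k+1) * (A ^ k)⁻¹ ≤ Bk := by
      calc (ENNReal.ofReal L) ^ (k+1) * (A ^ k)⁻¹ ≤ A ^ k * Bk * (A ^ k)⁻¹ :=
            mul_le_mul_left hmain3 _
        _ = Bk * (A ^ k * (A ^ k)⁻¹) := by ring
        _ = Bk := by rw [ENNReal.mul_inv_cancel hX0 hXtop, mul_one]
    calc (A ^ k)⁻¹ = ((ENNReal.ofReal L) ^ (k+1))⁻¹ *
          ((ENNReal.ofReal L) ^ (k+1) * (A ^ k)⁻¹) := by
          rw [← mul_assoc, ENNReal.inv_mul_cancel hY0 hYtop, one_mul]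
      _ ≤ ((ENNReal.ofReal L) ^ (k+1))⁻¹ * Bk := mul_le_mul_right step1 _
  have hofreal : ENNReal.ofReal ((I⁻¹)^k) = (A ^ k)⁻¹ := by
    rw [ENNReal.ofReal_pow (by positivity), ENNReal.ofReal_inv_of_pos hI_pos, ← hA,
      ENNReal.inv_pow]
  rw [hofreal]
  exact hgoal

lemma aux_exp_split (A C : ℝ) : ENNReal.ofReal (Real.exp (A + C))
    ≤ ENNReal.ofReal (Real.exp (2*A)) + ENNReal.ofReal (Real.exp (2*C)) := by
  rcases le_total A C with hab | hab
  · exact le_trans (ENNReal.ofReal_le_ofReal (Real.exp_le_exp.mpr (by linarith))) le_add_self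
  · exact le_trans (ENNReal.ofReal_le_ofReal (Real.exp_le_exp.mpr (by linarith))) le_self_add

/-- `B` is a standard one-dimensional Brownian motion started at `0` (on nonnegative times):
it starts at `0`, has continuous paths, its increments over `[s,t]` (for `0 ≤ s ≤ t`) are
centered Gaussian with variance `t − s`, and its increments over disjoint consecutive
intervals are independent. -/
def IsStdBrownianMotion {Ω : Type*} [MeasureSpace Ω] (B : ℝ → Ω → ℝ) : Prop :=
  (∀ ω, B 0 ω = 0) ∧ (∀ ω, Continuous fun t => B t ω) ∧
  (∀ s t : ℝ, 0 ≤ s → s ≤ t →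
    Measure.map (fun ω => B t ω - B s ω) (volume : Measure Ω)
      = gaussianReal 0 (t - s).toNNReal) ∧
  (∀ (n : ℕ) (ts : ℕ → ℝ), Monotone ts → (∀ i, 0 ≤ ts i) →
    iIndepFun (m := fun _ : Fin n => Real.measurableSpace)
      (fun i ω => B (ts (i + 1)) ω - B (ts i) ω) (volume : Measure Ω))

/-- Finiteness of the open KPZ partition function: for `L > 0` and `u + v > 0`, with
`(B_t)` a standard Brownian motion started at `0`,
`𝒵_{u,v} = ∫_ℝ E[exp(−2(u+v)x − 2v B_L − e^{−2x} ∫₀^L e^{−2B_t} dt)] dx < ∞`. -/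
theorem openKPZ_partition_function_finite
    {Ω : Type*} [MeasureSpace Ω] [IsProbabilityMeasure (volume : Measure Ω)]
    (L u v : ℝ) (hL : 0 < L) (huv : 0 < u + v)
    (B : ℝ → Ω → ℝ) (hB : IsStdBrownianMotion B) :
    (∫⁻ x : ℝ, ∫⁻ ω : Ω, ENNReal.ofReal
        (Real.exp (-2 * (u + v) * x - 2 * v * B L ω
          - Real.exp (-2 * x) * ∫ t in (0:ℝ)..L, Real.exp (-2 * B t ω)))) < ⊤ := by
  obtain ⟨hB0, hBcont, hBmap, -⟩ := hB
  -- marginals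
  have hmap : ∀ t : ℝ, 0 ≤ t →
      Measure.map (fun ω => B t ω) (volume : Measure Ω) = gaussianReal 0 t.toNNReal := by
    intro t ht
    have h1 := hBmap 0 t le_rfl ht
    simpa [hB0] using h1
  have hAE : ∀ t : ℝ, 0 ≤ t → AEMeasurable (B t) (volume : Measure Ω) := by
    intro t ht
    by_contra hcon
    have h1 := hmap t ht
    rw [Measure.map_of_not_aemeasurable hcon] at h1
    have h2 : (0 : Measure ℝ) Set.univ = gaussianReal 0 t.toNNReal Set.univ := by rw [h1]
    simp at h2
  -- measurable modification
  obtain ⟨f, hf_unc, hf_cont, hf_ae⟩ := aux_modification B hBcont hAE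
  have hf_meas : ∀ t : ℝ, Measurable (f t) := fun t => hf_unc.comp measurable_prodMk_left
  have hfmap : ∀ t : ℝ, 0 ≤ t →
      Measure.map (fun ω => f t ω) (volume : Measure Ω) = gaussianReal 0 t.toNNReal := by
    intro t ht
    rw [← hmap t ht]
    refine Measure.map_congr ?_
    filter_upwards [hf_ae] with ω hω using hω t ht
  have hmom : ∀ (t c : ℝ), 0 ≤ t →
      ∫⁻ ω, ENNReal.ofReal (Real.exp (c * f t ω)) = ENNReal.ofReal (Real.exp (c^2 * t / 2)) :=
    fun t c ht => aux_moment ht (hfmap t ht) c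
  -- constants
  set k : ℕ := ⌊u + v⌋₊ + 1 with hkdef
  have hk1 : 1 ≤ k := Nat.le_add_left 1 _
  have hkuv : u + v < (k:ℝ) := by
    rw [hkdef]
    push_cast
    exact Nat.lt_floor_add_one _
  set a : ℝ := 2*(u+v) with hadef
  have ha0 : 0 < a := by positivity
  have hb0 : 0 < 2*(k:ℝ) - a := by rw [hadef]; linarith
  -- replace B by f
  have hstep0 : ∀ x : ℝ,
      (∫⁻ ω : Ω, ENNReal.ofReal (Real.exp (-2 * (u + v) * x - 2 * v * B L ω
          - Real.exp (-2 * x) * ∫ t in (0:ℝ)..L, Real.exp (-2 * B t ω))))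
      = ∫⁻ ω : Ω, ENNReal.ofReal (Real.exp (-2 * (u + v) * x - 2 * v * f L ω
          - Real.exp (-2 * x) * ∫ t in Set.Ioc (0:ℝ) L, Real.exp (-2 * f t ω))) := by
    intro x
    refine lintegral_congr_ae ?_
    filter_upwards [hf_ae] with ω hω
    have hint_eq : (∫ t in (0:ℝ)..L, Real.exp (-2 * B t ω))
        = ∫ t in Set.Ioc (0:ℝ) L, Real.exp (-2 * f t ω) := by
      rw [← intervalIntegral.integral_of_le hL.le]
      refine (intervalIntegral.integral_congr fun t ht => ?_).symm
      rw [Set.uIcc_of_le hL.le] at ht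
      rw [hω t ht.1]
    rw [hω L hL.le, hint_eq]
  simp_rw [hstep0]
  clear hstep0 hmap hAE hBmap hB0 hBcont hf_ae
  set I : Ω → ℝ := fun ω => ∫ t in Set.Ioc (0:ℝ) L, Real.exp (-2 * f t ω) with hIdef
  have hI_pos : ∀ ω, 0 < I ω := by
    intro ω
    rw [hIdef]
    simp only
    rw [← intervalIntegral.integral_of_le hL.le]
    exact intervalIntegral.intervalIntegral_pos_of_pos
      (Continuous.intervalIntegrable (by have := hf_cont ω; fun_prop) _ _)
      (fun t => Real.exp_pos _) hL
  have hI_meas : Measurable I := by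
    have hF : StronglyMeasurable fun p : Ω × ℝ => Real.exp (-2 * f p.2 p.1) := by
      refine Measurable.stronglyMeasurable ?_
      have : Measurable fun p : Ω × ℝ => f p.2 p.1 := hf_unc.comp measurable_swap
      fun_prop
    exact (hF.integral_prod_right').measurable
  -- the functions
  set φ : Ω → ℝ := fun ω => f L ω with hφdef
  have hφ_meas : Measurable φ := hf_meas L
  set E : Ω → ℝ≥0∞ := fun ω => ENNReal.ofReal (Real.exp ((-2*v) * φ ω)) with hEdef
  have hE_meas : Measurable E := by fun_prop
  set Bk : Ω → ℝ≥0∞ :=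
    fun ω => ∫⁻ t in Set.Ioc (0:ℝ) L, ENNReal.ofReal (Real.exp (2*(k:ℝ) * f t ω)) with hBkdef
  have hBk_meas : Measurable Bk := by
    refine Measurable.lintegral_prod_right' (f := fun p : Ω × ℝ =>
      ENNReal.ofReal (Real.exp (2*(k:ℝ) * f p.2 p.1))) ?_
    have : Measurable fun p : Ω × ℝ => f p.2 p.1 := hf_unc.comp measurable_swap
    fun_prop
  set K₁ : ℝ≥0∞ := ∫⁻ x in Set.Ici (0:ℝ), ENNReal.ofReal (Real.exp (-(a * x))) with hK₁def
  set K₃ : ℝ≥0∞ := ∫⁻ x in Set.Iio (0:ℝ),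
    ENNReal.ofReal (Real.exp ((2*(k:ℝ) - a) * x)) with hK₃def
  have hK₁ : K₁ < ⊤ := aux_K1 ha0
  have hK₃ : K₃ < ⊤ := aux_K3 hb0
  set D : ℝ≥0∞ := ENNReal.ofReal ((k:ℝ)^k) * ((ENNReal.ofReal L ^ (k+1))⁻¹ * K₃) with hDdef
  have hD : D < ⊤ := by
    refine ENNReal.mul_lt_top ENNReal.ofReal_lt_top (ENNReal.mul_lt_top ?_ hK₃)
    exact ENNReal.inv_lt_top.mpr (by positivity)
  -- swap x and ω
  have hGm : Measurable (Function.uncurry fun x (ω : Ω) =>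
      ENNReal.ofReal (Real.exp (-2 * (u + v) * x - 2 * v * f L ω
        - Real.exp (-2 * x) * I ω))) := by
    have h1 : Measurable fun p : ℝ × Ω =>
        -2 * (u + v) * p.1 - 2 * v * f L p.2 - Real.exp (-2 * p.1) * I p.2 := by
      have h2 : Measurable (f L) := hf_meas L
      fun_prop
    exact h1.exp.ennreal_ofReal
  rw [lintegral_lintegral_swap hGm.aemeasurable]
  -- pointwise inner bound
  have key1 : ∀ ω : Ω, (∫⁻ x : ℝ, ENNReal.ofReal (Real.exp (-2 * (u + v) * x - 2 * v * f L ω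
      - Real.exp (-2 * x) * I ω))) ≤ E ω * K₁ + (E ω * Bk ω) * D := by
    intro ω
    have hfac : ∀ x : ℝ, ENNReal.ofReal (Real.exp (-2 * (u + v) * x - 2 * v * f L ω
        - Real.exp (-2 * x) * I ω))
        = E ω * ENNReal.ofReal (Real.exp (-(a * x) - Real.exp (-2*x) * I ω)) := by
      intro x
      rw [hEdef]
      simp only
      rw [← ENNReal.ofReal_mul (Real.exp_nonneg _), ← Real.exp_add]
      congr 1
      rw [hadef, hφdef]
      ring
    simp_rw [hfac]
    rw [lintegral_const_mul' _ _ ENNReal.ofReal_ne_top]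
    have h2 := aux_inner ha0 hk1 (hI_pos ω)
    have h3 : ENNReal.ofReal ((k:ℝ)^k * ((I ω)⁻¹)^k)
        ≤ ENNReal.ofReal ((k:ℝ)^k) * ((ENNReal.ofReal L ^ (k+1))⁻¹ * Bk ω) := by
      rw [ENNReal.ofReal_mul (by positivity)]
      refine mul_le_mul_right ?_ _
      have h4 := aux_holder (hf_cont ω) hL hk1
      exact h4
    calc E ω * ∫⁻ x : ℝ, ENNReal.ofReal (Real.exp (-(a * x) - Real.exp (-2*x) * I ω))
        ≤ E ω * (K₁ + ENNReal.ofReal ((k:ℝ)^k * ((I ω)⁻¹)^k) * K₃) := by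
          exact mul_le_mul_right h2 _
      _ ≤ E ω * (K₁ + (ENNReal.ofReal ((k:ℝ)^k) * ((ENNReal.ofReal L ^ (k+1))⁻¹ * Bk ω)) * K₃) := by
          exact mul_le_mul_right (add_le_add_right (mul_le_mul_left h3 _) _) _
      _ = E ω * K₁ + (E ω * Bk ω) * D := by rw [hDdef]; ring
  refine lt_of_le_of_lt (lintegral_mono key1) ?_
  rw [lintegral_add_left (hE_meas.mul_const _)]
  rw [lintegral_mul_const' _ _ (ne_of_lt hK₁), lintegral_mul_const' _ _ (ne_of_lt hD)]
  -- first moment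
  have hEint : ∫⁻ ω, E ω = ENNReal.ofReal (Real.exp ((-2*v)^2 * L / 2)) := by
    rw [hEdef]
    exact hmom L (-2*v) hL.le
  -- bound on E * Bk
  have key2 : ∀ ω : Ω, E ω * Bk ω ≤ ENNReal.ofReal L * ENNReal.ofReal (Real.exp ((-4*v) * φ ω))
      + ∫⁻ t in Set.Ioc (0:ℝ) L, ENNReal.ofReal (Real.exp ((4*(k:ℝ)) * f t ω)) := by
    intro ω
    have h1 : E ω * Bk ω = ∫⁻ t in Set.Ioc (0:ℝ) L,
        E ω * ENNReal.ofReal (Real.exp (2*(k:ℝ) * f t ω)) := by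
      rw [hBkdef]
      exact (lintegral_const_mul' _ _ ENNReal.ofReal_ne_top).symm
    rw [h1]
    have h2 : ∀ t : ℝ, E ω * ENNReal.ofReal (Real.exp (2*(k:ℝ) * f t ω))
        ≤ ENNReal.ofReal (Real.exp ((-4*v) * φ ω))
          + ENNReal.ofReal (Real.exp ((4*(k:ℝ)) * f t ω)) := by
      intro t
      rw [hEdef]
      simp only
      rw [← ENNReal.ofReal_mul (Real.exp_nonneg _), ← Real.exp_add]
      have h3 := aux_exp_split ((-2*v) * φ ω) (2*(k:ℝ) * f t ω)
      have e1 : 2 * ((-2*v) * φ ω) = (-4*v) * φ ω := by ring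
      have e2 : 2 * (2*(k:ℝ) * f t ω) = (4*(k:ℝ)) * f t ω := by ring
      rwa [e1, e2] at h3
    calc (∫⁻ t in Set.Ioc (0:ℝ) L, E ω * ENNReal.ofReal (Real.exp (2*(k:ℝ) * f t ω)))
        ≤ ∫⁻ t in Set.Ioc (0:ℝ) L, (ENNReal.ofReal (Real.exp ((-4*v) * φ ω))
            + ENNReal.ofReal (Real.exp ((4*(k:ℝ)) * f t ω))) := lintegral_mono fun t => h2 t
      _ = ENNReal.ofReal L * ENNReal.ofReal (Real.exp ((-4*v) * φ ω))
            + ∫⁻ t in Set.Ioc (0:ℝ) L, ENNReal.ofReal (Real.exp ((4*(k:ℝ)) * f t ω)) := by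
          rw [lintegral_add_left measurable_const, setLIntegral_const, Real.volume_Ioc,
            sub_zero, mul_comm]
  -- finiteness of ∫ E * Bk
  have hEBk : ∫⁻ ω, E ω * Bk ω < ⊤ := by
    refine lt_of_le_of_lt (lintegral_mono key2) ?_
    rw [lintegral_add_left']
    · refine ENNReal.add_lt_top.mpr ⟨?_, ?_⟩
      · rw [lintegral_const_mul' _ _ ENNReal.ofReal_ne_top]
        have := hmom L (-4*v) hL.le
        rw [hφdef]
        rw [this]
        exact ENNReal.mul_lt_top ENNReal.ofReal_lt_top ENNReal.ofReal_lt_top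
      · -- swap ω and t
        have hswap : (∫⁻ ω : Ω, ∫⁻ t in Set.Ioc (0:ℝ) L,
            ENNReal.ofReal (Real.exp ((4*(k:ℝ)) * f t ω)))
            = ∫⁻ t in Set.Ioc (0:ℝ) L, ∫⁻ ω : Ω,
              ENNReal.ofReal (Real.exp ((4*(k:ℝ)) * f t ω)) := by
          refine lintegral_lintegral_swap ?_
          have h1 : Measurable fun p : Ω × ℝ => f p.2 p.1 := hf_unc.comp measurable_swap
          have h2 : Measurable (Function.uncurry fun (ω : Ω) (t : ℝ) =>
              ENNReal.ofReal (Real.exp ((4*(k:ℝ)) * f t ω))) := by fun_prop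
          exact h2.aemeasurable
        rw [hswap]
        have hbound : ∀ t ∈ Set.Ioc (0:ℝ) L, (∫⁻ ω : Ω,
            ENNReal.ofReal (Real.exp ((4*(k:ℝ)) * f t ω)))
            ≤ ENNReal.ofReal (Real.exp ((4*(k:ℝ))^2 * L / 2)) := by
          intro t ht
          rw [hmom t (4*(k:ℝ)) ht.1.le]
          refine ENNReal.ofReal_le_ofReal (Real.exp_le_exp.mpr ?_)
          have h4 : (0:ℝ) ≤ (4*(k:ℝ))^2 := by positivity
          have := ht.2
          nlinarith
        refine lt_of_le_of_lt (setLIntegral_mono measurable_const hbound) ?_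
        rw [setLIntegral_const, Real.volume_Ioc]
        exact ENNReal.mul_lt_top ENNReal.ofReal_lt_top ENNReal.ofReal_lt_top
    · exact (by fun_prop : Measurable fun ω : Ω =>
        ENNReal.ofReal L * ENNReal.ofReal (Real.exp ((-4*v) * φ ω))).aemeasurable
  refine ENNReal.add_lt_top.mpr ⟨?_, ?_⟩
  · rw [hEint]
    exact ENNReal.mul_lt_top ENNReal.ofReal_lt_top hK₁
  · exact ENNReal.mul_lt_top hEBk hD
end

section
/- Let L > 0, v, x ∈ ℝ and δ > 0. Let g, g̃ : [0,L] → ℝ be continuous with sup_{t∈[0,L]} |g(t) − g̃(t)| ≤ δ, and set I := ∫₀^L e^{−2g̃(t)} dt and Φ(f) := exp( −2v f(L) − e^{−2x} ∫₀^L e^{−2f(t)} dt ). Then |Φ(g) − Φ(g̃)| ≤ Φ(g̃) · max{ exp( 2|v|δ + e^{−2x}(1 − e^{−2δ}) I ) − 1, 1 − exp( −2|v|δ − e^{−2x}(e^{2δ} − 1) I ) }. -/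
/-- Deterministic sup-norm perturbation estimate for the functional
`Φ(f) = exp(−2v f(L) − e^{−2x} ∫₀^L e^{−2f(t)} dt)`: if `g, g̃` are continuous on `[0,L]`
and uniformly `δ`-close there, then with `I = ∫₀^L e^{−2g̃(t)} dt`,
`|Φ(g) − Φ(g̃)| ≤ Φ(g̃) max{exp(2|v|δ + e^{−2x}(1−e^{−2δ})I) − 1,
                             1 − exp(−2|v|δ − e^{−2x}(e^{2δ}−1)I)}`. -/
theorem sup_norm_perturbation_estimate
    (L v x δ : ℝ) (hL : 0 < L) (hδ : 0 < δ)
    (g gt : ℝ → ℝ)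
    (hg : ContinuousOn g (Set.Icc 0 L)) (hgt : ContinuousOn gt (Set.Icc 0 L))
    (hclose : ∀ t ∈ Set.Icc (0:ℝ) L, |g t - gt t| ≤ δ) :
    |Real.exp (-2 * v * g L - Real.exp (-2 * x) * ∫ t in (0:ℝ)..L, Real.exp (-2 * g t))
        - Real.exp (-2 * v * gt L - Real.exp (-2 * x) * ∫ t in (0:ℝ)..L, Real.exp (-2 * gt t))|
      ≤ Real.exp (-2 * v * gt L - Real.exp (-2 * x) * ∫ t in (0:ℝ)..L, Real.exp (-2 * gt t)) *
          max
            (Real.exp (2 * |v| * δ + Real.exp (-2 * x) * (1 - Real.exp (-2 * δ)) *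
                ∫ t in (0:ℝ)..L, Real.exp (-2 * gt t)) - 1)
            (1 - Real.exp (-2 * |v| * δ - Real.exp (-2 * x) * (Real.exp (2 * δ) - 1) *
                ∫ t in (0:ℝ)..L, Real.exp (-2 * gt t))) := by
  have hIcc : Set.uIcc (0:ℝ) L = Set.Icc 0 L := Set.uIcc_of_le hL.le
  set Jg : ℝ := ∫ t in (0:ℝ)..L, Real.exp (-2 * g t) with hJg
  set I : ℝ := ∫ t in (0:ℝ)..L, Real.exp (-2 * gt t) with hI
  set A : ℝ := -2 * v * g L - Real.exp (-2 * x) * Jg with hA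
  set B : ℝ := -2 * v * gt L - Real.exp (-2 * x) * I with hB
  set U : ℝ := 2 * |v| * δ + Real.exp (-2 * x) * (1 - Real.exp (-2 * δ)) * I with hU
  set Lo : ℝ := -2 * |v| * δ - Real.exp (-2 * x) * (Real.exp (2 * δ) - 1) * I with hLo
  -- integrability
  have cg : ContinuousOn (fun t => Real.exp (-2 * g t)) (Set.Icc 0 L) :=
    Real.continuous_exp.comp_continuousOn (continuousOn_const.mul hg)
  have cgt : ContinuousOn (fun t => Real.exp (-2 * gt t)) (Set.Icc 0 L) :=
    Real.continuous_exp.comp_continuousOn (continuousOn_const.mul hgt)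
  have ig : IntervalIntegrable (fun t => Real.exp (-2 * g t)) MeasureTheory.volume 0 L :=
    (cg.mono hIcc.le).intervalIntegrable
  have igt : IntervalIntegrable (fun t => Real.exp (-2 * gt t)) MeasureTheory.volume 0 L :=
    (cgt.mono hIcc.le).intervalIntegrable
  have hI0 : 0 ≤ I :=
    intervalIntegral.integral_nonneg hL.le (fun t _ => (Real.exp_pos _).le)
  -- pointwise bounds
  have hpt_up : ∀ t ∈ Set.Icc (0:ℝ) L,
      Real.exp (-2 * g t) ≤ Real.exp (2 * δ) * Real.exp (-2 * gt t) := by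
    intro t ht
    rw [← Real.exp_add]
    apply Real.exp_le_exp.2
    have := (abs_le.1 (hclose t ht)).1
    linarith
  have hpt_lo : ∀ t ∈ Set.Icc (0:ℝ) L,
      Real.exp (-2 * δ) * Real.exp (-2 * gt t) ≤ Real.exp (-2 * g t) := by
    intro t ht
    rw [← Real.exp_add]
    apply Real.exp_le_exp.2
    have := (abs_le.1 (hclose t ht)).2
    linarith
  -- integral bounds
  have hJ_up : Jg ≤ Real.exp (2 * δ) * I := by
    rw [hJg, hI, ← intervalIntegral.integral_const_mul]
    exact intervalIntegral.integral_mono_on hL.le ig (igt.const_mul _) hpt_up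
  have hJ_lo : Real.exp (-2 * δ) * I ≤ Jg := by
    rw [hJg, hI, ← intervalIntegral.integral_const_mul]
    exact intervalIntegral.integral_mono_on hL.le (igt.const_mul _) ig hpt_lo
  have hex : (0:ℝ) < Real.exp (-2 * x) := Real.exp_pos _
  have hvL : |(-2 * v) * (g L - gt L)| ≤ 2 * |v| * δ := by
    rw [abs_mul]
    have h1 : |g L - gt L| ≤ δ := hclose L ⟨hL.le, le_refl L⟩
    have h2 : |(-2 * v)| = 2 * |v| := by
      rw [abs_mul, abs_neg]; norm_num
    rw [h2]
    have : (0:ℝ) ≤ 2 * |v| := by positivity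
    exact mul_le_mul_of_nonneg_left h1 this
  have hvL' := abs_le.1 hvL
  -- bounds on D := A - B
  have hAB : A - B = (-2 * v) * (g L - gt L) + Real.exp (-2 * x) * (I - Jg) := by
    rw [hA, hB]; ring
  have hD_up : A - B ≤ U := by
    rw [hAB, hU]
    have : Real.exp (-2 * x) * (I - Jg) ≤ Real.exp (-2 * x) * (1 - Real.exp (-2 * δ)) * I := by
      have : I - Jg ≤ (1 - Real.exp (-2 * δ)) * I := by nlinarith
      nlinarith
    linarith [hvL'.2]
  have hD_lo : Lo ≤ A - B := by
    rw [hAB, hLo]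
    have : -(Real.exp (-2 * x) * (Real.exp (2 * δ) - 1) * I) ≤ Real.exp (-2 * x) * (I - Jg) := by
      have : -((Real.exp (2 * δ) - 1) * I) ≤ I - Jg := by nlinarith
      nlinarith
    linarith [hvL'.1]
  -- combine
  have hfact : Real.exp A - Real.exp B = Real.exp B * (Real.exp (A - B) - 1) := by
    rw [mul_sub, mul_one, ← Real.exp_add]; ring_nf
  rw [hfact, abs_mul, abs_of_pos (Real.exp_pos B)]
  apply mul_le_mul_of_nonneg_left _ (Real.exp_pos B).le
  rcases le_or_gt 1 (Real.exp (A - B)) with h1 | h1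
  · rw [abs_of_nonneg (by linarith)]
    exact le_max_of_le_left (by linarith [Real.exp_le_exp.2 hD_up])
  · rw [abs_of_nonpos (by linarith)]
    have := Real.exp_le_exp.2 hD_lo
    exact le_max_of_le_right (by linarith)
end
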